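/- arXiv:1608.08474 — 2 statements merged into one kernel-verified Lean document; each statement's English description precedes it below -/
import Mathlib

section
/- Let 𝒱 and 𝒳 be finite nonempty sets, N ≥ 1, and let q be a joint pmf of (U^{1:N}, X) on 𝒱^N × 𝒳. Let δ > 0 and let F₁, S ⊆ {1, …, N} be disjoint sets such that H(U^j | U^{1:j−1}) ≤ δ for every j ∈ F₁ and H(U^j | U^{1:j−1} X) > log₂|𝒱| − δ for every j ∈ S (conditional entropies under q). Define the joint pmf p̃ on 𝒱^N × 𝒳 by p̃(u^{1:N}, x) = q_X(x) · ∏_{j∈F₁} q_{U^j|U^{1:j−1}}(u^j | u^{1:j−1}) · ∏_{j∈S} |𝒱|^{−1} · ∏_{j∉F₁∪S} q_{U^j|U^{1:j−1}X}(u^j | u^{1:j−1}, x). Then the variational distance satisfies V(q, p̃) ≤ √(2 ln 2) · √(N δ). (Lemma 6 of Section V of the paper (Lemma lemstrongcoord), obtained from the divergence bound via Pinsker's inequality.) -/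
open scoped ENNReal BigOperators

attribute [local instance] Classical.propDecidable

/-- Kullback–Leibler divergence (base 2) between two pmfs on a finite set,
valued in `[0, +∞]`. -/
noncomputable def klDiv {α : Type*} [Fintype α] (p q : α → ℝ) : ℝ≥0∞ :=
  if ∀ x, q x = 0 → p x = 0 then
    ENNReal.ofReal (∑ x, p x * Real.logb 2 (p x / q x))
  else ⊤

/-- A probability mass function on a finite set. -/
def IsPMF {α : Type*} [Fintype α] (p : α → ℝ) : Prop :=
  (∀ x, 0 ≤ p x) ∧ ∑ x, p x = 1

/-- Variational distance between two pmfs. -/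
noncomputable def varDist {α : Type*} [Fintype α] (p q : α → ℝ) : ℝ :=
  ∑ x, |p x - q x|

/-- `𝒳`-marginal of a joint pmf `q` of `(U^{1:N}, X)`. -/
noncomputable def margX {𝒱 𝒳 : Type*} [Fintype 𝒱] [Fintype 𝒳] {N : ℕ}
    (q : (Fin N → 𝒱) × 𝒳 → ℝ) (x : 𝒳) : ℝ :=
  ∑ u, q (u, x)

/-- Probability, under `q`, that the `U`-coordinates strictly before `j`
agree with `u` (marginally over `X`). -/
noncomputable def prefLTU {𝒱 𝒳 : Type*} [Fintype 𝒱] [Fintype 𝒳] [DecidableEq 𝒱] {N : ℕ}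
    (q : (Fin N → 𝒱) × 𝒳 → ℝ) (j : Fin N) (u : Fin N → 𝒱) : ℝ :=
  ∑ z : (Fin N → 𝒱) × 𝒳, if ∀ l, l < j → z.1 l = u l then q z else 0

/-- Probability, under `q`, that the `U`-coordinates up to and including `j`
agree with `u` (marginally over `X`). -/
noncomputable def prefLEU {𝒱 𝒳 : Type*} [Fintype 𝒱] [Fintype 𝒳] [DecidableEq 𝒱] {N : ℕ}
    (q : (Fin N → 𝒱) × 𝒳 → ℝ) (j : Fin N) (u : Fin N → 𝒱) : ℝ :=
  ∑ z : (Fin N → 𝒱) × 𝒳, if ∀ l, l ≤ j → z.1 l = u l then q z else 0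

/-- Conditional probability `q_{U^j|U^{1:j−1}}(u^j|u^{1:j−1})`, with the uniform
distribution chosen for conditioning values of probability zero. -/
noncomputable def condProbU {𝒱 𝒳 : Type*} [Fintype 𝒱] [Fintype 𝒳] [DecidableEq 𝒱] {N : ℕ}
    (q : (Fin N → 𝒱) × 𝒳 → ℝ) (j : Fin N) (u : Fin N → 𝒱) : ℝ :=
  if prefLTU q j u = 0 then (Fintype.card 𝒱 : ℝ)⁻¹ else prefLEU q j u / prefLTU q j u

/-- Probability, under `q`, that the `U`-coordinates strictly before `j` agree
with `u` and the `X`-coordinate equals `x`. -/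
noncomputable def prefLTUX {𝒱 𝒳 : Type*} [Fintype 𝒱] [Fintype 𝒳] [DecidableEq 𝒱] [DecidableEq 𝒳] {N : ℕ}
    (q : (Fin N → 𝒱) × 𝒳 → ℝ) (j : Fin N) (u : Fin N → 𝒱) (x : 𝒳) : ℝ :=
  ∑ z : (Fin N → 𝒱) × 𝒳, if (∀ l, l < j → z.1 l = u l) ∧ z.2 = x then q z else 0

/-- Probability, under `q`, that the `U`-coordinates up to and including `j`
agree with `u` and the `X`-coordinate equals `x`. -/
noncomputable def prefLEUX {𝒱 𝒳 : Type*} [Fintype 𝒱] [Fintype 𝒳] [DecidableEq 𝒱] [DecidableEq 𝒳] {N : ℕ}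
    (q : (Fin N → 𝒱) × 𝒳 → ℝ) (j : Fin N) (u : Fin N → 𝒱) (x : 𝒳) : ℝ :=
  ∑ z : (Fin N → 𝒱) × 𝒳, if (∀ l, l ≤ j → z.1 l = u l) ∧ z.2 = x then q z else 0

/-- Conditional probability `q_{U^j|U^{1:j−1} X}(u^j|u^{1:j−1}, x)`, with the
uniform distribution chosen for conditioning values of probability zero. -/
noncomputable def condProbUX {𝒱 𝒳 : Type*} [Fintype 𝒱] [Fintype 𝒳] [DecidableEq 𝒱] [DecidableEq 𝒳] {N : ℕ}
    (q : (Fin N → 𝒱) × 𝒳 → ℝ) (j : Fin N) (u : Fin N → 𝒱) (x : 𝒳) : ℝ :=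
  if prefLTUX q j u x = 0 then (Fintype.card 𝒱 : ℝ)⁻¹
  else prefLEUX q j u x / prefLTUX q j u x

/-- Conditional Shannon entropy `H(U^j | U^{1:j−1})` under `q`. -/
noncomputable def condEntU {𝒱 𝒳 : Type*} [Fintype 𝒱] [Fintype 𝒳] [DecidableEq 𝒱] {N : ℕ}
    (q : (Fin N → 𝒱) × 𝒳 → ℝ) (j : Fin N) : ℝ :=
  -∑ z : (Fin N → 𝒱) × 𝒳, q z * Real.logb 2 (condProbU q j z.1)

/-- Conditional Shannon entropy `H(U^j | U^{1:j−1} X)` under `q`. -/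
noncomputable def condEntUX {𝒱 𝒳 : Type*} [Fintype 𝒱] [Fintype 𝒳] [DecidableEq 𝒱] [DecidableEq 𝒳] {N : ℕ}
    (q : (Fin N → 𝒱) × 𝒳 → ℝ) (j : Fin N) : ℝ :=
  -∑ z : (Fin N → 𝒱) × 𝒳, q z * Real.logb 2 (condProbUX q j z.1 z.2)

/-- The polar-encoder joint pmf `p̃(u^{1:N}, x)` for conditional resolvability:
`X` keeps its marginal; positions in `F₁` are drawn from the conditionals given
the past `U`'s only, positions in `S` are uniform, and the remaining positions
are drawn from the conditionals given the past `U`'s and `X`. -/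
noncomputable def ptilde {𝒱 𝒳 : Type*} [Fintype 𝒱] [Fintype 𝒳] [DecidableEq 𝒱] [DecidableEq 𝒳] {N : ℕ}
    (q : (Fin N → 𝒱) × 𝒳 → ℝ) (F₁ S : Finset (Fin N)) : (Fin N → 𝒱) × 𝒳 → ℝ :=
  fun z => margX q z.2 * ∏ j : Fin N,
    (if j ∈ F₁ then condProbU q j z.1
     else if j ∈ S then (Fintype.card 𝒱 : ℝ)⁻¹
     else condProbUX q j z.1 z.2)


open Finset

/-- `G t = (t+1) log t - 2(t-1)` is monotone on `(0,∞)`. -/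
private lemma G_hasDeriv {t : ℝ} (ht : 0 < t) :
    HasDerivAt (fun t : ℝ => (t+1)*Real.log t - 2*(t-1)) (Real.log t + 1/t - 1) t := by
  have h1 : HasDerivAt (fun t : ℝ => (t+1)*Real.log t) (1 * Real.log t + (t+1) * t⁻¹) t :=
    ((hasDerivAt_id t).add_const 1).mul (Real.hasDerivAt_log ht.ne')
  have h2 : HasDerivAt (fun t : ℝ => 2*(t-1)) 2 t := by
    simpa using ((hasDerivAt_id t).sub_const 1).const_mul 2
  have := h1.fun_sub h2
  refine this.congr_deriv ?_
  field_simp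
  ring

private lemma G_sign {t : ℝ} (ht : 0 < t) :
    (1 ≤ t → 0 ≤ (t+1)*Real.log t - 2*(t-1)) ∧ (t ≤ 1 → (t+1)*Real.log t - 2*(t-1) ≤ 0) := by
  set G : ℝ → ℝ := fun t => (t+1)*Real.log t - 2*(t-1) with hG
  have hderiv : ∀ s ∈ Set.Ioi (0:ℝ), 0 ≤ Real.log s + 1/s - 1 := by
    intro s hs
    have := Real.one_sub_inv_le_log_of_pos (Set.mem_Ioi.mp hs)
    have : 1 - 1/s ≤ Real.log s := by rwa [one_div]
    linarith
  have hmono : MonotoneOn G (Set.Ioi 0) := by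
    apply monotoneOn_of_deriv_nonneg (convex_Ioi 0)
    · intro s hs
      exact (G_hasDeriv hs).continuousAt.continuousWithinAt
    · intro s hs
      rw [interior_Ioi] at hs
      exact (G_hasDeriv hs).differentiableAt.differentiableWithinAt
    · intro s hs
      rw [interior_Ioi] at hs
      rw [(G_hasDeriv hs).deriv]
      exact hderiv s hs
  have hG1 : G 1 = 0 := by simp [hG]
  constructor
  · intro h1
    have := hmono (Set.mem_Ioi.mpr one_pos) (Set.mem_Ioi.mpr ht) h1
    rwa [hG1] at this
  · intro h1
    have := hmono (Set.mem_Ioi.mpr ht) (Set.mem_Ioi.mpr one_pos) h1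
    rwa [hG1] at this

private lemma F_hasDeriv {t : ℝ} (ht : 0 < t) :
    HasDerivAt (fun t : ℝ => 2*(t+2)*(t*Real.log t - t + 1) - 3*(t-1)^2)
      (4*((t+1)*Real.log t - 2*(t-1))) t := by
  have hlog : HasDerivAt (fun t : ℝ => t*Real.log t) (Real.log t + 1) t := by
    have := (hasDerivAt_id t).fun_mul (Real.hasDerivAt_log ht.ne')
    refine this.congr_deriv ?_
    field_simp
    simp only [id]
    ring
  have h1 : HasDerivAt (fun t : ℝ => 2*(t+2)) 2 t := by
    simpa using ((hasDerivAt_id t).add_const 2).const_mul 2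
  have h2 : HasDerivAt (fun t : ℝ => t*Real.log t - t + 1)
      (Real.log t + 1 - 1) t := ((hlog.sub (hasDerivAt_id t)).add_const 1)
  have h3 := h1.fun_mul h2
  have h4 : HasDerivAt (fun t : ℝ => 3*(t-1)^2) (3*(2*(t-1))) t := by
    have : HasDerivAt (fun t : ℝ => (t-1)^2) (2*(t-1)) t := by
      simpa using ((hasDerivAt_id t).sub_const 1).fun_pow 2
    simpa using this.const_mul 3
  have := h3.fun_sub h4
  refine this.congr_deriv ?_
  ring

/-- Key inequality: `3(t-1)² ≤ 2(t+2)(t log t - t + 1)` for `t ≥ 0`. -/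
private lemma key_ineq {t : ℝ} (ht : 0 ≤ t) :
    3*(t-1)^2 ≤ 2*(t+2)*(t*Real.log t - t + 1) := by
  rcases eq_or_lt_of_le ht with h0 | htpos
  · simp [← h0]; norm_num
  set F : ℝ → ℝ := fun t => 2*(t+2)*(t*Real.log t - t + 1) - 3*(t-1)^2 with hF
  have hFcont : Continuous F := by
    have : Continuous fun t : ℝ => t * Real.log t := Real.continuous_mul_log
    fun_prop
  have hF1 : F 1 = 0 := by simp [hF]
  have hFt : 0 ≤ F t := by
    rcases le_total 1 t with h1 | h1
    · have hmono : MonotoneOn F (Set.Ici 1) := by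
        apply monotoneOn_of_deriv_nonneg (convex_Ici 1) hFcont.continuousOn
        · intro s hs
          rw [interior_Ici] at hs
          exact (F_hasDeriv (lt_trans one_pos hs)).differentiableAt.differentiableWithinAt
        · intro s hs
          rw [interior_Ici] at hs
          have hs0 : (0:ℝ) < s := lt_trans one_pos hs
          rw [(F_hasDeriv hs0).deriv]
          have := (G_sign hs0).1 hs.le
          linarith
      have := hmono (Set.mem_Ici.mpr le_rfl) (Set.mem_Ici.mpr h1) h1
      rwa [hF1] at this
    · have hanti : AntitoneOn F (Set.Icc t 1) := by
        apply antitoneOn_of_deriv_nonpos (convex_Icc t 1) hFcont.continuousOn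
        · intro s hs
          rw [interior_Icc] at hs
          exact (F_hasDeriv (lt_trans htpos hs.1)).differentiableAt.differentiableWithinAt
        · intro s hs
          rw [interior_Icc] at hs
          have hs0 : (0:ℝ) < s := lt_trans htpos hs.1
          rw [(F_hasDeriv hs0).deriv]
          have := (G_sign hs0).2 hs.2.le
          linarith
      have := hanti (Set.mem_Icc.mpr ⟨le_rfl, h1⟩) (Set.mem_Icc.mpr ⟨h1, le_rfl⟩) h1
      rwa [hF1] at this
  simpa [hF] using hFt

/-- Pointwise Pinsker-type bound. -/
private lemma pointwise_bound {p q : ℝ} (hp : 0 ≤ p) (hq : 0 < q) :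
    (p-q)^2 / ((p + 2*q)/3) ≤ 2*(p*Real.log (p/q) - p + q) := by
  have hq' : q ≠ 0 := hq.ne'
  have htp : p / q * q = p := div_mul_cancel₀ p hq'
  set t := p / q with htdef
  have ht : (0:ℝ) ≤ t := div_nonneg hp hq.le
  have hkey := key_ineq ht
  rw [div_le_iff₀ (by positivity)]
  rw [← htp]
  have hq2 : (0:ℝ) < q^2 := by positivity
  nlinarith [mul_le_mul_of_nonneg_right hkey hq2.le]

/-- Pinsker's inequality (squared form, natural log) for finite pmfs. -/
private lemma pinsker_sq {α : Type*} [Fintype α] {p q : α → ℝ}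
    (hp0 : ∀ x, 0 ≤ p x) (hp1 : ∑ x, p x = 1)
    (hq0 : ∀ x, 0 ≤ q x) (hq1 : ∑ x, q x = 1)
    (habs : ∀ x, q x = 0 → p x = 0) :
    (∑ x, |p x - q x|)^2 ≤ 2 * ∑ x, p x * Real.log (p x / q x) := by
  classical
  set s : Finset α := Finset.univ.filter (fun x => 0 < q x) with hs
  have hmem : ∀ x, x ∈ s ↔ 0 < q x := by intro x; simp [hs]
  have hzero : ∀ x, x ∉ s → p x = 0 ∧ q x = 0 := by
    intro x hx
    have : ¬ 0 < q x := by simpa [hs] using hx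
    have hqx : q x = 0 := le_antisymm (not_lt.mp this) (hq0 x)
    exact ⟨habs x hqx, hqx⟩
  -- restrict sums to s
  have hV : ∑ x, |p x - q x| = ∑ x ∈ s, |p x - q x| := by
    rw [← Finset.sum_subset (Finset.subset_univ s)]
    intro x _ hx
    rcases hzero x hx with ⟨h1, h2⟩
    simp [h1, h2]
  have hK : ∑ x, p x * Real.log (p x / q x) = ∑ x ∈ s, p x * Real.log (p x / q x) := by
    rw [← Finset.sum_subset (Finset.subset_univ s)]
    intro x _ hx
    simp [(hzero x hx).1]
  have hps : ∑ x ∈ s, p x = 1 := by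
    rw [← hp1, Finset.sum_subset (Finset.subset_univ s)]
    intro x _ hx
    exact (hzero x hx).1
  have hqs : ∑ x ∈ s, q x ≤ 1 := by
    rw [← hq1]
    exact Finset.sum_le_sum_of_subset_of_nonneg (Finset.subset_univ s)
      (fun x _ _ => hq0 x)
  rw [hV, hK]
  rcases Finset.eq_empty_or_nonempty s with hse | hsne
  · simp [hse] at hps
  have hgpos : ∀ x ∈ s, 0 < (p x + 2 * q x)/3 := by
    intro x hx
    have := (hmem x).mp hx
    have := hp0 x
    positivity
  have hgsum_pos : 0 < ∑ x ∈ s, (p x + 2 * q x)/3 :=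
    Finset.sum_pos hgpos hsne
  have hgsum_le : ∑ x ∈ s, (p x + 2 * q x)/3 ≤ 1 := by
    have : ∑ x ∈ s, (p x + 2 * q x)/3 = ((∑ x ∈ s, p x) + 2 * ∑ x ∈ s, q x)/3 := by
      rw [← Finset.sum_div, Finset.sum_add_distrib, ← Finset.mul_sum]
    rw [this, hps]
    linarith
  have step1 : (∑ x ∈ s, |p x - q x|)^2 ≤
      (∑ x ∈ s, |p x - q x|)^2 / ∑ x ∈ s, (p x + 2 * q x)/3 := by
    rw [le_div_iff₀ hgsum_pos]
    nlinarith [sq_nonneg (∑ x ∈ s, |p x - q x|)]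
  have step2 := Finset.sq_sum_div_le_sum_sq_div s (fun x => |p x - q x|) hgpos
  have step3 : ∑ x ∈ s, |p x - q x|^2 / ((p x + 2 * q x)/3) ≤
      ∑ x ∈ s, 2*(p x * Real.log (p x / q x) - p x + q x) := by
    apply Finset.sum_le_sum
    intro x hx
    rw [sq_abs]
    exact pointwise_bound (hp0 x) ((hmem x).mp hx)
  have step4 : ∑ x ∈ s, 2*(p x * Real.log (p x / q x) - p x + q x) ≤
      2 * ∑ x ∈ s, p x * Real.log (p x / q x) := by
    have : ∑ x ∈ s, 2*(p x * Real.log (p x / q x) - p x + q x) =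
        2 * (∑ x ∈ s, p x * Real.log (p x / q x)) - 2 * (∑ x ∈ s, p x)
          + 2 * (∑ x ∈ s, q x) := by
      rw [Finset.mul_sum, Finset.mul_sum, Finset.mul_sum, ← Finset.sum_sub_distrib,
        ← Finset.sum_add_distrib]
      exact Finset.sum_congr rfl fun x _ => by ring
    rw [this, hps]
    linarith
  calc (∑ x ∈ s, |p x - q x|)^2
      ≤ (∑ x ∈ s, |p x - q x|)^2 / ∑ x ∈ s, (p x + 2 * q x)/3 := step1
    _ ≤ ∑ x ∈ s, |p x - q x|^2 / ((p x + 2 * q x)/3) := step2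
    _ ≤ ∑ x ∈ s, 2*(p x * Real.log (p x / q x) - p x + q x) := step3
    _ ≤ 2 * ∑ x ∈ s, p x * Real.log (p x / q x) := step4

set_option linter.unusedSectionVars false

section Aux

open Finset

private lemma ite_nonneg' {c : Prop} [Decidable c] {a : ℝ} (ha : 0 ≤ a) :
    0 ≤ if c then a else 0 := by split_ifs <;> simp [ha]

variable {𝒱 𝒳 : Type*} [Fintype 𝒱] [Fintype 𝒳] [DecidableEq 𝒱] [DecidableEq 𝒳] {N : ℕ}


variable (q : (Fin N → 𝒱) × 𝒳 → ℝ)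

private lemma margX_nonneg (h : ∀ z, 0 ≤ q z) (x : 𝒳) : 0 ≤ margX q x :=
  Finset.sum_nonneg fun u _ => h (u, x)

private lemma prefLTU_nonneg (h : ∀ z, 0 ≤ q z) (j : Fin N) (u : Fin N → 𝒱) :
    0 ≤ prefLTU q j u := by
  unfold prefLTU; exact Finset.sum_nonneg fun w _ => ite_nonneg' (h w)

private lemma prefLEU_nonneg (h : ∀ z, 0 ≤ q z) (j : Fin N) (u : Fin N → 𝒱) :
    0 ≤ prefLEU q j u := by
  unfold prefLEU; exact Finset.sum_nonneg fun w _ => ite_nonneg' (h w)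

private lemma prefLTUX_nonneg (h : ∀ z, 0 ≤ q z) (j : Fin N) (u : Fin N → 𝒱) (x : 𝒳) :
    0 ≤ prefLTUX q j u x := by
  unfold prefLTUX; exact Finset.sum_nonneg fun w _ => ite_nonneg' (h w)

private lemma prefLEUX_nonneg (h : ∀ z, 0 ≤ q z) (j : Fin N) (u : Fin N → 𝒱) (x : 𝒳) :
    0 ≤ prefLEUX q j u x := by
  unfold prefLEUX; exact Finset.sum_nonneg fun w _ => ite_nonneg' (h w)

private lemma le_prefLTU (h : ∀ z, 0 ≤ q z) (j : Fin N) (z : (Fin N → 𝒱) × 𝒳) :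
    q z ≤ prefLTU q j z.1 := by
  have := Finset.single_le_sum (f := fun w : (Fin N → 𝒱) × 𝒳 =>
      if ∀ l, l < j → w.1 l = z.1 l then q w else 0)
    (fun w _ => ite_nonneg' (h w))
    (Finset.mem_univ z)
  simpa [prefLTU, prefLEU, prefLTUX, prefLEUX] using this

private lemma le_prefLEU (h : ∀ z, 0 ≤ q z) (j : Fin N) (z : (Fin N → 𝒱) × 𝒳) :
    q z ≤ prefLEU q j z.1 := by
  have := Finset.single_le_sum (f := fun w : (Fin N → 𝒱) × 𝒳 =>
      if ∀ l, l ≤ j → w.1 l = z.1 l then q w else 0)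
    (fun w _ => ite_nonneg' (h w))
    (Finset.mem_univ z)
  simpa [prefLTU, prefLEU, prefLTUX, prefLEUX] using this

private lemma le_prefLTUX (h : ∀ z, 0 ≤ q z) (j : Fin N) (z : (Fin N → 𝒱) × 𝒳) :
    q z ≤ prefLTUX q j z.1 z.2 := by
  have := Finset.single_le_sum (f := fun w : (Fin N → 𝒱) × 𝒳 =>
      if (∀ l, l < j → w.1 l = z.1 l) ∧ w.2 = z.2 then q w else 0)
    (fun w _ => ite_nonneg' (h w))
    (Finset.mem_univ z)
  simpa [prefLTU, prefLEU, prefLTUX, prefLEUX] using this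

private lemma le_prefLEUX (h : ∀ z, 0 ≤ q z) (j : Fin N) (z : (Fin N → 𝒱) × 𝒳) :
    q z ≤ prefLEUX q j z.1 z.2 := by
  have := Finset.single_le_sum (f := fun w : (Fin N → 𝒱) × 𝒳 =>
      if (∀ l, l ≤ j → w.1 l = z.1 l) ∧ w.2 = z.2 then q w else 0)
    (fun w _ => ite_nonneg' (h w))
    (Finset.mem_univ z)
  simpa [prefLTU, prefLEU, prefLTUX, prefLEUX] using this

private lemma prefLEU_le_prefLTU (h : ∀ z, 0 ≤ q z) (j : Fin N) (u : Fin N → 𝒱) :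
    prefLEU q j u ≤ prefLTU q j u := by
  apply Finset.sum_le_sum
  intro w _
  by_cases hw : ∀ l, l ≤ j → w.1 l = u l
  · rw [if_pos hw, if_pos (fun l hl => hw l hl.le)]
  · rw [if_neg hw]
    exact ite_nonneg' (h w)

private lemma prefLEUX_le_prefLTUX (h : ∀ z, 0 ≤ q z) (j : Fin N) (u : Fin N → 𝒱) (x : 𝒳) :
    prefLEUX q j u x ≤ prefLTUX q j u x := by
  apply Finset.sum_le_sum
  intro w _
  by_cases hw : (∀ l, l ≤ j → w.1 l = u l) ∧ w.2 = x
  · rw [if_pos hw, if_pos ⟨fun l hl => hw.1 l hl.le, hw.2⟩]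
  · rw [if_neg hw]
    exact ite_nonneg' (h w)

variable [Nonempty 𝒱]

private lemma cardV_pos : (0:ℝ) < (Fintype.card 𝒱 : ℝ) := by
  exact_mod_cast Fintype.card_pos

private lemma condProbU_nonneg (h : ∀ z, 0 ≤ q z) (j : Fin N) (u : Fin N → 𝒱) :
    0 ≤ condProbU q j u := by
  unfold condProbU
  split_ifs
  · positivity
  · exact div_nonneg (prefLEU_nonneg q h j u) (prefLTU_nonneg q h j u)

private lemma condProbUX_nonneg (h : ∀ z, 0 ≤ q z) (j : Fin N) (u : Fin N → 𝒱) (x : 𝒳) :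
    0 ≤ condProbUX q j u x := by
  unfold condProbUX
  split_ifs
  · positivity
  · exact div_nonneg (prefLEUX_nonneg q h j u x) (prefLTUX_nonneg q h j u x)

private lemma condProbU_pos (h : ∀ z, 0 ≤ q z) (j : Fin N) {z : (Fin N → 𝒱) × 𝒳}
    (hz : 0 < q z) : 0 < condProbU q j z.1 := by
  unfold condProbU
  split_ifs with h0
  · positivity
  · exact div_pos (lt_of_lt_of_le hz (le_prefLEU q h j z))
      (lt_of_le_of_ne (prefLTU_nonneg q h j z.1) (Ne.symm h0))

private lemma condProbUX_pos (h : ∀ z, 0 ≤ q z) (j : Fin N) {z : (Fin N → 𝒱) × 𝒳}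
    (hz : 0 < q z) : 0 < condProbUX q j z.1 z.2 := by
  unfold condProbUX
  split_ifs with h0
  · positivity
  · exact div_pos (lt_of_lt_of_le hz (le_prefLEUX q h j z))
      (lt_of_le_of_ne (prefLTUX_nonneg q h j z.1 z.2) (Ne.symm h0))

private lemma condProbU_le_one (h : ∀ z, 0 ≤ q z) (j : Fin N) (u : Fin N → 𝒱) :
    condProbU q j u ≤ 1 := by
  unfold condProbU
  split_ifs with h0
  · rw [inv_le_one_iff₀]
    right
    exact_mod_cast Fintype.card_pos
  · exact div_le_one_of_le₀ (prefLEU_le_prefLTU q h j u)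
      (prefLTU_nonneg q h j u)

private lemma condProbUX_le_one (h : ∀ z, 0 ≤ q z) (j : Fin N) (u : Fin N → 𝒱) (x : 𝒳) :
    condProbUX q j u x ≤ 1 := by
  unfold condProbUX
  split_ifs with h0
  · rw [inv_le_one_iff₀]
    right
    exact_mod_cast Fintype.card_pos
  · exact div_le_one_of_le₀ (prefLEUX_le_prefLTUX q h j u x)
      (prefLTUX_nonneg q h j u x)

private noncomputable def prefK (q : (Fin N → 𝒱) × 𝒳 → ℝ) (k : ℕ) (u : Fin N → 𝒱) (x : 𝒳) : ℝ :=
  ∑ z : (Fin N → 𝒱) × 𝒳, if (∀ l : Fin N, (l:ℕ) < k → z.1 l = u l) ∧ z.2 = x then q z else 0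

private lemma prefK_zero (u : Fin N → 𝒱) (x : 𝒳) : prefK q 0 u x = margX q x := by
  unfold prefK margX
  rw [Fintype.sum_prod_type]
  apply Finset.sum_congr rfl
  intro w _
  rw [show (∑ y, if (∀ l : Fin N, (l:ℕ) < 0 → w l = u l) ∧ y = x then q (w, y) else 0)
      = ∑ y, if y = x then q (w, y) else 0 from
    Finset.sum_congr rfl fun y _ => if_congr (by simp) rfl rfl]
  simp

private lemma prefK_last (u : Fin N → 𝒱) (x : 𝒳) {k : ℕ} (hk : N ≤ k) :
    prefK q k u x = q (u, x) := by
  unfold prefK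
  have hiff : ∀ z : (Fin N → 𝒱) × 𝒳,
      ((∀ l : Fin N, (l:ℕ) < k → z.1 l = u l) ∧ z.2 = x) ↔ z = (u, x) := by
    intro z
    constructor
    · rintro ⟨h1, h2⟩
      exact Prod.ext (funext fun l => h1 l (lt_of_lt_of_le l.isLt hk)) h2
    · rintro rfl
      exact ⟨fun _ _ => rfl, rfl⟩
  rw [Finset.sum_congr rfl fun z _ => if_congr (hiff z) rfl rfl]
  simp

private lemma le_prefK (h : ∀ z, 0 ≤ q z) (k : ℕ) (u : Fin N → 𝒱) (x : 𝒳) :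
    q (u, x) ≤ prefK q k u x := by
  have := Finset.single_le_sum (f := fun w : (Fin N → 𝒱) × 𝒳 =>
      if (∀ l : Fin N, (l:ℕ) < k → w.1 l = u l) ∧ w.2 = x then q w else 0)
    (fun w _ => ite_nonneg' (h w)) (Finset.mem_univ (u, x))
  simpa [prefK] using this

private lemma prefLTUX_eq_prefK (j : Fin N) (u : Fin N → 𝒱) (x : 𝒳) :
    prefLTUX q j u x = prefK q (j : ℕ) u x := by
  unfold prefLTUX prefK
  exact Finset.sum_congr rfl fun z _ => if_congr
    ⟨fun h => ⟨fun l hl => h.1 l hl, h.2⟩, fun h => ⟨fun l hl => h.1 l hl, h.2⟩⟩ rfl rfl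

private lemma prefLEUX_eq_prefK (j : Fin N) (u : Fin N → 𝒱) (x : 𝒳) :
    prefLEUX q j u x = prefK q ((j : ℕ) + 1) u x := by
  unfold prefLEUX prefK
  refine Finset.sum_congr rfl fun z _ => if_congr (and_congr_left fun _ => ?_) rfl rfl
  constructor
  · intro h l hl
    exact h l (by omega)
  · intro h l hl
    exact h l (by omega)

private lemma prod_tele (f : ℕ → ℝ) : ∀ n : ℕ, (∀ k, k ≤ n → f k ≠ 0) →
    ∏ k ∈ Finset.range n, f (k+1) / f k = f n / f 0
  | 0, h => by simp [div_self (h 0 le_rfl)]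
  | (n+1), h => by
    rw [Finset.prod_range_succ, prod_tele f n (fun k hk => h k (hk.trans n.le_succ)),
      mul_comm, div_mul_div_cancel₀ (h n (by omega))]

private lemma q_eq_prod (h : ∀ z, 0 ≤ q z) {z : (Fin N → 𝒱) × 𝒳} (hz : 0 < q z) :
    q z = margX q z.2 * ∏ j : Fin N, condProbUX q j z.1 z.2 := by
  have hqz : q (z.1, z.2) = q z := by rw [Prod.mk.eta]
  have hk : ∀ k : ℕ, 0 < prefK q k z.1 z.2 := fun k =>
    lt_of_lt_of_le (hqz ▸ hz) (le_prefK q h k z.1 z.2)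
  have hcond : ∀ j : Fin N, condProbUX q j z.1 z.2
      = prefK q ((j:ℕ)+1) z.1 z.2 / prefK q (j:ℕ) z.1 z.2 := by
    intro j
    unfold condProbUX
    rw [prefLTUX_eq_prefK, prefLEUX_eq_prefK, if_neg (hk (j:ℕ)).ne']
  calc q z = q (z.1, z.2) := hqz.symm
    _ = margX q z.2 * (prefK q N z.1 z.2 / prefK q 0 z.1 z.2) := by
        rw [prefK_last q z.1 z.2 le_rfl, prefK_zero]
        rw [mul_div_assoc']
        rw [mul_comm, mul_div_assoc, div_self (by rw [← prefK_zero q z.1 z.2]; exact (hk 0).ne'), mul_one]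
    _ = margX q z.2 * ∏ j : Fin N, condProbUX q j z.1 z.2 := by
        congr 1
        calc prefK q N z.1 z.2 / prefK q 0 z.1 z.2
            = ∏ k ∈ Finset.range N, prefK q (k+1) z.1 z.2 / prefK q k z.1 z.2 :=
              (prod_tele (fun k => prefK q k z.1 z.2) N (fun k _ => (hk k).ne')).symm
          _ = ∏ j : Fin N, prefK q ((j:ℕ)+1) z.1 z.2 / prefK q (j:ℕ) z.1 z.2 :=
              (Fin.prod_univ_eq_prod_range
                (fun k => prefK q (k+1) z.1 z.2 / prefK q k z.1 z.2) N).symm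
          _ = ∏ j : Fin N, condProbUX q j z.1 z.2 :=
              Finset.prod_congr rfl fun j _ => (hcond j).symm

private lemma ptilde_nonneg (h : ∀ z, 0 ≤ q z) (F₁ S : Finset (Fin N)) (z : (Fin N → 𝒱) × 𝒳) :
    0 ≤ ptilde q F₁ S z := by
  apply mul_nonneg (margX_nonneg q h z.2)
  apply Finset.prod_nonneg
  intro j _
  split_ifs
  · exact condProbU_nonneg q h j z.1
  · positivity
  · exact condProbUX_nonneg q h j z.1 z.2

private lemma margX_pos (h : ∀ z, 0 ≤ q z) {z : (Fin N → 𝒱) × 𝒳} (hz : 0 < q z) :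
    0 < margX q z.2 := by
  have h0 := le_prefK q h 0 z.1 z.2
  rw [prefK_zero] at h0
  have : q (z.1, z.2) = q z := by rw [Prod.mk.eta]
  linarith [this ▸ hz]

private lemma ptilde_pos (h : ∀ z, 0 ≤ q z) (F₁ S : Finset (Fin N)) {z : (Fin N → 𝒱) × 𝒳}
    (hz : 0 < q z) : 0 < ptilde q F₁ S z := by
  apply mul_pos (margX_pos q h hz)
  apply Finset.prod_pos
  intro j _
  split_ifs
  · exact condProbU_pos q h j hz
  · positivity
  · exact condProbUX_pos q h j hz

private lemma prefLTU_congr {j : Fin N} {u v : Fin N → 𝒱} (h : ∀ l, l < j → u l = v l) :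
    prefLTU q j u = prefLTU q j v := by
  unfold prefLTU
  exact Finset.sum_congr rfl fun z _ => if_congr
    ⟨fun hz l hl => (hz l hl).trans (h l hl), fun hz l hl => (hz l hl).trans (h l hl).symm⟩ rfl rfl

private lemma prefLEU_congr {j : Fin N} {u v : Fin N → 𝒱} (h : ∀ l, l ≤ j → u l = v l) :
    prefLEU q j u = prefLEU q j v := by
  unfold prefLEU
  exact Finset.sum_congr rfl fun z _ => if_congr
    ⟨fun hz l hl => (hz l hl).trans (h l hl), fun hz l hl => (hz l hl).trans (h l hl).symm⟩ rfl rfl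

private lemma prefLTUX_congr {j : Fin N} {u v : Fin N → 𝒱} (x : 𝒳) (h : ∀ l, l < j → u l = v l) :
    prefLTUX q j u x = prefLTUX q j v x := by
  unfold prefLTUX
  exact Finset.sum_congr rfl fun z _ => if_congr
    (and_congr_left fun _ =>
      ⟨fun hz l hl => (hz l hl).trans (h l hl), fun hz l hl => (hz l hl).trans (h l hl).symm⟩)
    rfl rfl

private lemma prefLEUX_congr {j : Fin N} {u v : Fin N → 𝒱} (x : 𝒳) (h : ∀ l, l ≤ j → u l = v l) :
    prefLEUX q j u x = prefLEUX q j v x := by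
  unfold prefLEUX
  exact Finset.sum_congr rfl fun z _ => if_congr
    (and_congr_left fun _ =>
      ⟨fun hz l hl => (hz l hl).trans (h l hl), fun hz l hl => (hz l hl).trans (h l hl).symm⟩)
    rfl rfl

private lemma condProbU_congr {j : Fin N} {u v : Fin N → 𝒱} (h : ∀ l, l ≤ j → u l = v l) :
    condProbU q j u = condProbU q j v := by
  unfold condProbU
  rw [prefLTU_congr q (fun l hl => h l hl.le), prefLEU_congr q h]

private lemma condProbUX_congr {j : Fin N} {u v : Fin N → 𝒱} (x : 𝒳)
    (h : ∀ l, l ≤ j → u l = v l) : condProbUX q j u x = condProbUX q j v x := by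
  unfold condProbUX
  rw [prefLTUX_congr q x (fun l hl => h l hl.le), prefLEUX_congr q x h]

private lemma update_cond_iff {j : Fin N} {u : Fin N → 𝒱} {w : Fin N → 𝒱} (v : 𝒱) :
    (∀ l, l ≤ j → w l = Function.update u j v l) ↔ ((∀ l, l < j → w l = u l) ∧ w j = v) := by
  constructor
  · intro h
    refine ⟨fun l hl => (h l hl.le).trans (Function.update_of_ne hl.ne _ _), ?_⟩
    exact (h j le_rfl).trans (Function.update_self _ _ _)
  · rintro ⟨h1, h2⟩ l hl
    rcases lt_or_eq_of_le hl with hlt | hEq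
    · rw [Function.update_of_ne hlt.ne _ _]
      exact h1 l hlt
    · subst hEq
      rw [Function.update_self]
      exact h2

private lemma sum_prefLEU_update (j : Fin N) (u : Fin N → 𝒱) :
    ∑ v : 𝒱, prefLEU q j (Function.update u j v) = prefLTU q j u := by
  unfold prefLEU prefLTU
  rw [Finset.sum_comm]
  apply Finset.sum_congr rfl
  intro z _
  rw [Finset.sum_congr rfl fun v _ => if_congr (update_cond_iff (u := u) (w := z.1) v) rfl rfl]
  by_cases hP : ∀ l, l < j → z.1 l = u l
  · rw [if_pos hP, Finset.sum_congr rfl fun v _ => if_congr (and_iff_right hP) rfl rfl,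
      Finset.sum_ite_eq]
    simp
  · rw [if_neg hP, Finset.sum_congr rfl fun v _ => if_neg (fun hc => hP hc.1),
      Finset.sum_const_zero]

private lemma sum_prefLEUX_update (j : Fin N) (u : Fin N → 𝒱) (x : 𝒳) :
    ∑ v : 𝒱, prefLEUX q j (Function.update u j v) x = prefLTUX q j u x := by
  unfold prefLEUX prefLTUX
  rw [Finset.sum_comm]
  apply Finset.sum_congr rfl
  intro z _
  rw [Finset.sum_congr rfl fun v _ => if_congr
    (⟨fun h => ⟨⟨((update_cond_iff v).mp h.1).1, h.2⟩, ((update_cond_iff v).mp h.1).2⟩,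
      fun h => ⟨(update_cond_iff v).mpr ⟨h.1.1, h.2⟩, h.1.2⟩⟩ :
      ((∀ l, l ≤ j → z.1 l = Function.update u j v l) ∧ z.2 = x) ↔
        (((∀ l, l < j → z.1 l = u l) ∧ z.2 = x) ∧ z.1 j = v)) rfl rfl]
  by_cases hP : (∀ l, l < j → z.1 l = u l) ∧ z.2 = x
  · rw [if_pos hP, Finset.sum_congr rfl fun v _ => if_congr (and_iff_right hP) rfl rfl,
      Finset.sum_ite_eq]
    simp
  · rw [if_neg hP, Finset.sum_congr rfl fun v _ => if_neg (fun hc => hP hc.1),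
      Finset.sum_const_zero]

private lemma sum_condProbU_update (j : Fin N) (u : Fin N → 𝒱) :
    ∑ v : 𝒱, condProbU q j (Function.update u j v) = 1 := by
  have hLT : ∀ v : 𝒱, prefLTU q j (Function.update u j v) = prefLTU q j u := fun v =>
    prefLTU_congr q fun l hl => Function.update_of_ne hl.ne _ _
  by_cases h0 : prefLTU q j u = 0
  · rw [Finset.sum_congr rfl fun v _ => by
      unfold condProbU; rw [hLT v, if_pos h0]]
    rw [Finset.sum_const, Finset.card_univ, nsmul_eq_mul,
      mul_inv_cancel₀ (cardV_pos (𝒱 := 𝒱)).ne']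
  · rw [Finset.sum_congr rfl fun v _ => by
      unfold condProbU; rw [hLT v, if_neg h0]]
    rw [← Finset.sum_div, sum_prefLEU_update, div_self h0]

private lemma sum_condProbUX_update (j : Fin N) (u : Fin N → 𝒱) (x : 𝒳) :
    ∑ v : 𝒱, condProbUX q j (Function.update u j v) x = 1 := by
  have hLT : ∀ v : 𝒱, prefLTUX q j (Function.update u j v) x = prefLTUX q j u x := fun v =>
    prefLTUX_congr q x fun l hl => Function.update_of_ne hl.ne _ _
  by_cases h0 : prefLTUX q j u x = 0
  · rw [Finset.sum_congr rfl fun v _ => by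
      unfold condProbUX; rw [hLT v, if_pos h0]]
    rw [Finset.sum_const, Finset.card_univ, nsmul_eq_mul,
      mul_inv_cancel₀ (cardV_pos (𝒱 := 𝒱)).ne']
  · rw [Finset.sum_congr rfl fun v _ => by
      unfold condProbUX; rw [hLT v, if_neg h0]]
    rw [← Finset.sum_div, sum_prefLEUX_update, div_self h0]

private lemma sum_prod_seq (g : Fin N → (Fin N → 𝒱) → ℝ)
    (hdep : ∀ (j : Fin N) (u v : Fin N → 𝒱), (∀ l, l ≤ j → u l = v l) → g j u = g j v)
    (hsum : ∀ (j : Fin N) (u : Fin N → 𝒱), ∑ v : 𝒱, g j (Function.update u j v) = 1) :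
    ∑ u : Fin N → 𝒱, ∏ j : Fin N, g j u = 1 := by
  have main : ∀ k : ℕ, k ≤ N →
      ∑ u : Fin N → 𝒱, ∏ j ∈ Finset.univ.filter (fun j : Fin N => (j:ℕ) < k), g j u
        = (Fintype.card 𝒱 : ℝ) ^ (N - k) := by
    intro k
    induction k with
    | zero =>
      intro _
      have : Finset.univ.filter (fun j : Fin N => (j:ℕ) < 0) = ∅ := by
        apply Finset.filter_false_of_mem
        intro j _
        omega
      simp [this, Finset.card_univ]
    | succ k ih =>
      intro hk1
      have hk : k < N := hk1
      have ihv := ih hk.le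
      set jk : Fin N := ⟨k, hk⟩ with hjk
      have hfilter : Finset.univ.filter (fun j : Fin N => (j:ℕ) < k + 1)
          = insert jk (Finset.univ.filter (fun j : Fin N => (j:ℕ) < k)) := by
        ext j
        simp only [Finset.mem_filter, Finset.mem_insert, Finset.mem_univ, true_and]
        constructor
        · intro hj
          rcases Nat.lt_succ_iff_lt_or_eq.mp hj with h | h
          · exact Or.inr h
          · exact Or.inl (Fin.ext h)
        · rintro (rfl | h)
          · exact Nat.lt_succ_self k
          · omega
      have hnot : jk ∉ Finset.univ.filter (fun j : Fin N => (j:ℕ) < k) := by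
        simp [hjk]
      set F : (Fin N → 𝒱) → ℝ := fun u =>
        g jk u * ∏ j ∈ Finset.univ.filter (fun j : Fin N => (j:ℕ) < k), g j u with hF
      have hstep : ∑ u : Fin N → 𝒱,
          ∏ j ∈ Finset.univ.filter (fun j : Fin N => (j:ℕ) < k + 1), g j u
          = ∑ u : Fin N → 𝒱, F u := by
        apply Finset.sum_congr rfl
        intro u _
        rw [hfilter, Finset.prod_insert hnot]
      -- involution trick
      have hinv : Function.Involutive
          (fun p : (Fin N → 𝒱) × 𝒱 => (Function.update p.1 jk p.2, p.1 jk)) := by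
        intro p
        simp [Function.update_idem, Function.update_eq_self]
      set E := hinv.toPerm with hE
      have hcard : (Fintype.card 𝒱 : ℝ) * ∑ u : Fin N → 𝒱, F u
          = ∑ p : (Fin N → 𝒱) × 𝒱, F p.1 := by
        rw [Fintype.sum_prod_type]
        simp [Finset.sum_const, Finset.card_univ, Finset.mul_sum, mul_comm]
      have hre : ∑ p : (Fin N → 𝒱) × 𝒱, F p.1
          = ∑ p : (Fin N → 𝒱) × 𝒱, F (Function.update p.1 jk p.2) :=
        (Equiv.sum_comp E (fun p => F p.1)).symm
      have hsplit : ∑ p : (Fin N → 𝒱) × 𝒱, F (Function.update p.1 jk p.2)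
          = ∑ u : Fin N → 𝒱, (∏ j ∈ Finset.univ.filter (fun j : Fin N => (j:ℕ) < k), g j u)
              * ∑ v : 𝒱, g jk (Function.update u jk v) := by
        rw [Fintype.sum_prod_type]
        apply Finset.sum_congr rfl
        intro u _
        rw [Finset.mul_sum]
        apply Finset.sum_congr rfl
        intro v _
        simp only [hF]
        have hprod : ∏ j ∈ Finset.univ.filter (fun j : Fin N => (j:ℕ) < k),
            g j (Function.update u jk v)
            = ∏ j ∈ Finset.univ.filter (fun j : Fin N => (j:ℕ) < k), g j u := by
          apply Finset.prod_congr rfl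
          intro j hj
          have hjlt : (j:ℕ) < k := (Finset.mem_filter.mp hj).2
          apply hdep j _ _
          intro l hl
          apply Function.update_of_ne
          intro hc
          have : (l:ℕ) = k := by rw [hc]
          omega
        rw [hprod]
        ring
      have hone : ∀ u : Fin N → 𝒱, ∑ v : 𝒱, g jk (Function.update u jk v) = 1 :=
        fun u => hsum jk u
      have htot : (Fintype.card 𝒱 : ℝ) * ∑ u : Fin N → 𝒱, F u
          = (Fintype.card 𝒱 : ℝ) ^ (N - k) := by
        rw [hcard, hre, hsplit]
        rw [Finset.sum_congr rfl fun u _ => by rw [hone u, mul_one]]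
        exact ihv
      have hNk : N - k = (N - (k+1)) + 1 := by omega
      rw [hstep]
      apply mul_left_cancel₀ (cardV_pos (𝒱 := 𝒱)).ne'
      rw [htot, hNk, pow_succ]
      ring
  have := main N le_rfl
  have hfull : Finset.univ.filter (fun j : Fin N => (j:ℕ) < N) = Finset.univ := by
    apply Finset.filter_true_of_mem
    intro j _
    exact j.isLt
  rw [hfull] at this
  simpa using this

private lemma sum_ptilde (hq : IsPMF q) (F₁ S : Finset (Fin N)) :
    ∑ z : (Fin N → 𝒱) × 𝒳, ptilde q F₁ S z = 1 := by
  unfold ptilde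
  rw [Fintype.sum_prod_type, Finset.sum_comm]
  have hx : ∀ x : 𝒳, ∑ u : Fin N → 𝒱, (margX q x * ∏ j : Fin N,
      (if j ∈ F₁ then condProbU q j u
       else if j ∈ S then (Fintype.card 𝒱 : ℝ)⁻¹
       else condProbUX q j u x)) = margX q x := by
    intro x
    rw [← Finset.mul_sum]
    rw [sum_prod_seq (fun j u => if j ∈ F₁ then condProbU q j u
        else if j ∈ S then (Fintype.card 𝒱 : ℝ)⁻¹ else condProbUX q j u x)
      ?hdep ?hsum, mul_one]
    case hdep =>
      intro j u v h
      beta_reduce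
      split_ifs
      · exact condProbU_congr q h
      · rfl
      · exact condProbUX_congr q x h
    case hsum =>
      intro j u
      beta_reduce
      split_ifs
      · exact sum_condProbU_update q j u
      · rw [Finset.sum_const, Finset.card_univ, nsmul_eq_mul,
          mul_inv_cancel₀ (cardV_pos (𝒱 := 𝒱)).ne']
      · exact sum_condProbUX_update q j u x
  rw [Finset.sum_congr rfl fun x _ => hx x]
  unfold margX
  rw [← Finset.sum_comm, ← Fintype.sum_prod_type]
  simpa using hq.2

private lemma condEntUX_nonneg (hq : IsPMF q) (j : Fin N) : 0 ≤ condEntUX q j := by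
  unfold condEntUX
  rw [neg_nonneg]
  apply Finset.sum_nonpos
  intro z _
  rcases eq_or_lt_of_le (hq.1 z) with h0 | hpos
  · rw [← h0, zero_mul]
  · exact mul_nonpos_of_nonneg_of_nonpos hpos.le
      (Real.logb_nonpos one_lt_two (condProbUX_nonneg q hq.1 j z.1 z.2)
        (condProbUX_le_one q hq.1 j z.1 z.2))

end Aux

/-- Lemma 6 of Section V (lemstrongcoord): for the conditional-resolvability
polar encoder, the variational distance satisfies
`V(q, p̃) ≤ √(2 ln 2) · √(N δ)`. -/
theorem varDist_cond_resolvability_encoder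
    {𝒱 𝒳 : Type*} [Fintype 𝒱] [Fintype 𝒳] [DecidableEq 𝒱] [DecidableEq 𝒳]
    [Nonempty 𝒱] [Nonempty 𝒳] {N : ℕ} (hN : 1 ≤ N)
    (q : (Fin N → 𝒱) × 𝒳 → ℝ) (hq : IsPMF q) (δ : ℝ) (hδ : 0 < δ)
    (F₁ S : Finset (Fin N)) (hdisj : Disjoint F₁ S)
    (hF₁ : ∀ j ∈ F₁, condEntU q j ≤ δ)
    (hS : ∀ j ∈ S, Real.logb 2 (Fintype.card 𝒱) - δ < condEntUX q j) :
    varDist q (ptilde q F₁ S) ≤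
      Real.sqrt (2 * Real.log 2) * Real.sqrt ((N : ℝ) * δ) := by
  obtain ⟨hq0, hq1⟩ := hq
  set pt : (Fin N → 𝒱) × 𝒳 → ℝ := ptilde q F₁ S with hptdef
  set r : Fin N → ((Fin N → 𝒱) × 𝒳) → ℝ := fun j z =>
    (if j ∈ F₁ then condProbU q j z.1
     else if j ∈ S then (Fintype.card 𝒱 : ℝ)⁻¹
     else condProbUX q j z.1 z.2) with hrdef
  have hptr : ∀ z, pt z = margX q z.2 * ∏ j : Fin N, r j z := fun z => rfl
  have hpt0 : ∀ z, 0 ≤ pt z := ptilde_nonneg q hq0 F₁ S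
  have hpt1 : ∑ z, pt z = 1 := sum_ptilde q ⟨hq0, hq1⟩ F₁ S
  have habs : ∀ z, pt z = 0 → q z = 0 := by
    intro z hz
    by_contra hc
    exact absurd hz
      (ne_of_gt (ptilde_pos q hq0 F₁ S (lt_of_le_of_ne (hq0 z) (Ne.symm hc))))
  have hpin := pinsker_sq hq0 hq1 hpt0 hpt1 habs
  have hlog2 : (0:ℝ) < Real.log 2 := Real.log_pos (by norm_num)
  set B := ∑ z : (Fin N → 𝒱) × 𝒳, q z * Real.logb 2 (q z / pt z) with hB
  have hKL : ∑ z : (Fin N → 𝒱) × 𝒳, q z * Real.log (q z / pt z) = Real.log 2 * B := by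
    rw [hB, Finset.mul_sum]
    apply Finset.sum_congr rfl
    intro z _
    rw [Real.logb]
    field_simp
  have hzsplit : ∀ z : (Fin N → 𝒱) × 𝒳, q z * Real.logb 2 (q z / pt z)
      = ∑ j : Fin N, (q z * Real.logb 2 (condProbUX q j z.1 z.2)
          - q z * Real.logb 2 (r j z)) := by
    intro z
    rcases eq_or_lt_of_le (hq0 z) with h0 | hpos
    · simp [← h0]
    · have hru : ∀ j, 0 < r j z := by
        intro j
        rw [hrdef]
        beta_reduce
        split_ifs
        · exact condProbU_pos q hq0 j hpos
        · exact inv_pos.mpr (cardV_pos (𝒱 := 𝒱))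
        · exact condProbUX_pos q hq0 j hpos
      have hcu : ∀ j, 0 < condProbUX q j z.1 z.2 := fun j => condProbUX_pos q hq0 j hpos
      have hmarg : 0 < margX q z.2 := margX_pos q hq0 hpos
      have hqratio : q z / pt z = ∏ j : Fin N, condProbUX q j z.1 z.2 / r j z := by
        rw [hptr z]
        conv_lhs => rw [q_eq_prod q hq0 hpos]
        rw [mul_div_mul_left _ _ hmarg.ne']
        exact (Finset.prod_div_distrib _ _).symm
      rw [hqratio, Real.logb_prod _ _ (fun j _ => (div_pos (hcu j) (hru j)).ne'),
        Finset.mul_sum]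
      apply Finset.sum_congr rfl
      intro j _
      rw [Real.logb_div (hcu j).ne' (hru j).ne', mul_sub]
  have hBsum : B = ∑ j : Fin N,
      ((∑ z : (Fin N → 𝒱) × 𝒳, q z * Real.logb 2 (condProbUX q j z.1 z.2))
        - ∑ z : (Fin N → 𝒱) × 𝒳, q z * Real.logb 2 (r j z)) := by
    rw [hB, Finset.sum_congr rfl fun z _ => hzsplit z, Finset.sum_comm]
    exact Finset.sum_congr rfl fun j _ => by rw [Finset.sum_sub_distrib]
  have hC : ∀ j : Fin N,
      ((∑ z : (Fin N → 𝒱) × 𝒳, q z * Real.logb 2 (condProbUX q j z.1 z.2))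
        - ∑ z : (Fin N → 𝒱) × 𝒳, q z * Real.logb 2 (r j z))
      ≤ (if j ∈ F₁ ∪ S then δ else 0) := by
    intro j
    have hnn := condEntUX_nonneg q ⟨hq0, hq1⟩ j
    have h1 : ∑ z : (Fin N → 𝒱) × 𝒳, q z * Real.logb 2 (condProbUX q j z.1 z.2)
        = -condEntUX q j := by
      unfold condEntUX; ring
    by_cases hjF : j ∈ F₁
    · have hr : ∀ z : (Fin N → 𝒱) × 𝒳, r j z = condProbU q j z.1 := by
        intro z; rw [hrdef]; beta_reduce; rw [if_pos hjF]
      have hsr : ∑ z : (Fin N → 𝒱) × 𝒳, q z * Real.logb 2 (r j z)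
          = ∑ z : (Fin N → 𝒱) × 𝒳, q z * Real.logb 2 (condProbU q j z.1) :=
        Finset.sum_congr rfl fun z _ => by rw [hr z]
      rw [hsr, h1]
      have h2 : ∑ z : (Fin N → 𝒱) × 𝒳, q z * Real.logb 2 (condProbU q j z.1)
          = -condEntU q j := by
        unfold condEntU; ring
      rw [h2, if_pos (Finset.mem_union_left _ hjF)]
      have := hF₁ j hjF
      linarith
    · by_cases hjS : j ∈ S
      · have hr : ∀ z : (Fin N → 𝒱) × 𝒳, r j z = (Fintype.card 𝒱 : ℝ)⁻¹ := by
          intro z; rw [hrdef]; beta_reduce; rw [if_neg hjF, if_pos hjS]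
        have hsr : ∑ z : (Fin N → 𝒱) × 𝒳, q z * Real.logb 2 (r j z)
            = ∑ z : (Fin N → 𝒱) × 𝒳, q z * Real.logb 2 ((Fintype.card 𝒱 : ℝ)⁻¹) :=
          Finset.sum_congr rfl fun z _ => by rw [hr z]
        rw [hsr, h1, ← Finset.sum_mul, hq1,
          one_mul, Real.logb_inv, if_pos (Finset.mem_union_right _ hjS)]
        have := hS j hjS
        linarith
      · have hr : ∀ z : (Fin N → 𝒱) × 𝒳, r j z = condProbUX q j z.1 z.2 := by
          intro z; rw [hrdef]; beta_reduce; rw [if_neg hjF, if_neg hjS]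
        have hsr : ∑ z : (Fin N → 𝒱) × 𝒳, q z * Real.logb 2 (r j z)
            = ∑ z : (Fin N → 𝒱) × 𝒳, q z * Real.logb 2 (condProbUX q j z.1 z.2) :=
          Finset.sum_congr rfl fun z _ => by rw [hr z]
        rw [hsr, sub_self, if_neg (by simp [hjF, hjS])]
  have hBle : B ≤ (N:ℝ) * δ := by
    rw [hBsum]
    calc ∑ j : Fin N, ((∑ z : (Fin N → 𝒱) × 𝒳, q z * Real.logb 2 (condProbUX q j z.1 z.2))
          - ∑ z : (Fin N → 𝒱) × 𝒳, q z * Real.logb 2 (r j z))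
        ≤ ∑ j : Fin N, (if j ∈ F₁ ∪ S then δ else 0) :=
          Finset.sum_le_sum fun j _ => hC j
      _ = ((F₁ ∪ S).card : ℝ) * δ := by
          rw [Finset.sum_ite_mem, Finset.sum_const, nsmul_eq_mul]
          simp
      _ ≤ (N:ℝ) * δ := by
          apply mul_le_mul_of_nonneg_right _ hδ.le
          have h2 : (Finset.univ : Finset (Fin N)).card = N := by
            rw [Finset.card_univ, Fintype.card_fin]
          have h := (Finset.card_le_univ (F₁ ∪ S)).trans_eq h2
          exact_mod_cast h

  have hVnn : 0 ≤ varDist q pt := Finset.sum_nonneg fun z _ => abs_nonneg _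
  have hV2 : (varDist q pt)^2 ≤ 2 * Real.log 2 * ((N:ℝ) * δ) := by
    calc (varDist q pt)^2 ≤ 2 * ∑ z : (Fin N → 𝒱) × 𝒳, q z * Real.log (q z / pt z) := hpin
      _ = 2 * (Real.log 2 * B) := by rw [hKL]
      _ ≤ 2 * Real.log 2 * ((N:ℝ) * δ) := by nlinarith
  calc varDist q pt = Real.sqrt ((varDist q pt)^2) := (Real.sqrt_sq hVnn).symm
    _ ≤ Real.sqrt (2 * Real.log 2 * ((N:ℝ) * δ)) := Real.sqrt_le_sqrt hV2
    _ = Real.sqrt (2 * Real.log 2) * Real.sqrt ((N:ℝ) * δ) :=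
        Real.sqrt_mul (by positivity) _
end

section
/- Let 𝒳 be a finite set with |𝒳| ≥ 2, N ≥ 1, and let p, q be pmfs on 𝒳^N with coordinate random variables U¹, …, U^N. Set D = √(2 ln 2) · √(D(q‖p)) and assume 0 < D ≤ 1/2. Then for every j ∈ {1, …, N}, H_p(U^j | U^{1:j−1}) − H_q(U^j | U^{1:j−1}) ≤ 2 N · D · log₂( |𝒳| / D ), where H_r(U^j | U^{1:j−1}) denotes the base-2 conditional entropy of the j-th coordinate given the first j−1 coordinates under the pmf r. (Per-position conditional-entropy continuity bound, Eq. (eq11a), established in the proof of Lemma 5 of the paper.) -/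
open scoped ENNReal BigOperators

attribute [local instance] Classical.propDecidable

/-- Base-2 Shannon entropy of a pmf. -/
noncomputable def shannonEntropy {α : Type*} [Fintype α] (p : α → ℝ) : ℝ :=
  -∑ x, p x * Real.logb 2 (p x)

/-- Pushforward (marginal) of a pmf along a map. -/
noncomputable def pushforward {Ω β : Type*} [Fintype Ω] [DecidableEq β]
    (p : Ω → ℝ) (f : Ω → β) : β → ℝ :=
  fun b => ∑ ω, if f ω = b then p ω else 0

/-- Conditional entropy `H_r(U^j | U^{1:j−1}) = H(r_{U^{1:j}}) − H(r_{U^{1:j−1}})`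
of the `j`-th coordinate given the preceding coordinates, for a pmf `r`
on `𝒳^N` (base-2, chain-rule form). -/
noncomputable def condEntChain {𝒳 : Type*} [Fintype 𝒳] [DecidableEq 𝒳] {N : ℕ}
    (r : (Fin N → 𝒳) → ℝ) (j : Fin N) : ℝ :=
  shannonEntropy (pushforward r (fun u => fun l : Fin ((j : ℕ) + 1) => u (Fin.castLE j.isLt l))) -
    shannonEntropy (pushforward r (fun u => fun l : Fin (j : ℕ) => u (Fin.castLE j.isLt.le l)))

section Aux
open Real

/-- Padé bound: `2(t-1)/(t+1) ≤ log t` for `t ≥ 1`. -/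
lemma pade_ge {t : ℝ} (ht : 1 ≤ t) : 2 * (t - 1) / (t + 1) ≤ Real.log t := by
  have key : MonotoneOn (fun t : ℝ => Real.log t - 2 * (t - 1) / (t + 1)) (Set.Ici 1) := by
    apply monotoneOn_of_deriv_nonneg (convex_Ici 1)
    · apply ContinuousOn.sub
      · exact Real.continuousOn_log.mono (by intro x hx; simp at hx ⊢; nlinarith [hx])
      · apply ContinuousOn.div (by fun_prop) (by fun_prop)
        intro x hx; simp at hx; nlinarith
    · intro x hx
      rw [interior_Ici] at hx
      simp only [Set.mem_Ioi] at hx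
      apply DifferentiableAt.differentiableWithinAt
      apply DifferentiableAt.sub
      · exact Real.differentiableAt_log (by linarith)
      · apply DifferentiableAt.div (by fun_prop) (by fun_prop); nlinarith
    · intro x hx
      rw [interior_Ici] at hx
      simp only [Set.mem_Ioi] at hx
      have hx0 : (0:ℝ) < x := by linarith
      have h1 : HasDerivAt (fun t : ℝ => Real.log t - 2 * (t - 1) / (t + 1))
          (x⁻¹ - (2 * (x + 1) - 2 * (x - 1)) / (x + 1) ^ 2) x := by
        have hl := Real.hasDerivAt_log (ne_of_gt hx0)
        have hd : HasDerivAt (fun t : ℝ => 2 * (t - 1) / (t + 1))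
            ((2 * (x + 1) - 2 * (x - 1) * 1) / (x + 1) ^ 2) x := by
          exact HasDerivAt.div (by simpa using ((hasDerivAt_id x).sub_const 1).const_mul 2)
            ((hasDerivAt_id x).add_const 1) (by nlinarith)
        simpa using hl.fun_sub hd
      rw [h1.deriv, sub_nonneg, div_le_iff₀ (by positivity), inv_eq_one_div,
        div_mul_eq_mul_div, le_div_iff₀ hx0]
      nlinarith [sq_nonneg (x - 1)]
  have h0 := key (Set.self_mem_Ici) (Set.mem_Ici.2 ht) ht
  simp at h0
  linarith

lemma pade_le {t : ℝ} (ht0 : 0 < t) (ht : t ≤ 1) : Real.log t ≤ 2 * (t - 1) / (t + 1) := by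
  have h := pade_ge (t := 1 / t) (by rw [le_div_iff₀ ht0]; linarith)
  rw [Real.log_div one_ne_zero (ne_of_gt ht0), Real.log_one] at h
  have ht' : t ≠ 0 := ne_of_gt ht0
  have he : 2 * (1 / t - 1) / (1 / t + 1) = 2 * (1 - t) / (t + 1) := by
    have h2 : 1 / t + 1 = (1 + t) / t := by field_simp
    have h1 : 2 * (1 / t - 1) = 2 * (1 - t) / t := by field_simp
    rw [h1, h2, div_div_div_cancel_right₀]
    · ring_nf
    · exact ht'
  rw [he] at h
  have : 2 * (1 - t) / (t + 1) = -(2 * (t - 1) / (t + 1)) := by ring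
  linarith [this ▸ h]

/-- Core inequality for Pinsker: `3(t-1)²/(2(t+2)) ≤ t log t - t + 1` for `t > 0`. -/
lemma core_ineq {t : ℝ} (ht : 0 < t) : 3 * (t - 1) ^ 2 / (2 * (t + 2)) ≤ t * Real.log t - t + 1 := by
  set G : ℝ → ℝ := fun t => t * Real.log t - t + 1 - 3 * (t - 1) ^ 2 / (2 * (t + 2)) with hG
  have hcont : ContinuousOn G (Set.Ioi 0) := by
    apply ContinuousOn.sub
    · apply ContinuousOn.add (ContinuousOn.sub ?_ (by fun_prop)) (by fun_prop)
      exact Real.continuous_mul_log.continuousOn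
    · apply ContinuousOn.div (by fun_prop) (by fun_prop)
      intro x hx; simp at hx; nlinarith
  have hderiv : ∀ x : ℝ, 0 < x → HasDerivAt G
      (Real.log x - 3 / 2 * ((x - 1) * (x + 5)) / (x + 2) ^ 2) x := by
    intro x hx
    have h1 : HasDerivAt (fun t : ℝ => t * Real.log t) (Real.log x + 1) x :=
      Real.hasDerivAt_mul_log (ne_of_gt hx)
    have h2 : HasDerivAt (fun t : ℝ => 3 * (t - 1) ^ 2 / (2 * (t + 2)))
        ((3 * (2 * (x - 1)) * (2 * (x + 2)) - 3 * (x - 1) ^ 2 * 2) / (2 * (x + 2)) ^ 2) x := by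
      apply HasDerivAt.div
      · have : HasDerivAt (fun t : ℝ => (t - 1) ^ 2) (2 * (x - 1)) x := by
          simpa using ((hasDerivAt_id x).sub_const 1).fun_pow 2
        simpa [mul_comm, mul_assoc] using this.const_mul 3
      · simpa using ((hasDerivAt_id x).add_const 2).const_mul 2
      · nlinarith
    have h3 := (h1.fun_sub (hasDerivAt_id x)).add_const 1
    have := h3.fun_sub h2
    refine this.congr_deriv ?_
    have hx2 : (x + 2) ≠ 0 := by nlinarith
    field_simp
    ring
  have hmono : MonotoneOn G (Set.Ici 1) := by
    apply monotoneOn_of_deriv_nonneg (convex_Ici 1) (hcont.mono (by intro x hx; simp at hx ⊢; linarith))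
    · intro x hx
      rw [interior_Ici] at hx; simp at hx
      exact (hderiv x (by linarith)).differentiableAt.differentiableWithinAt
    · intro x hx
      rw [interior_Ici] at hx; simp at hx
      rw [(hderiv x (by linarith)).deriv]
      have hp := pade_ge (le_of_lt hx)
      rw [sub_nonneg]
      calc 3 / 2 * ((x - 1) * (x + 5)) / (x + 2) ^ 2 ≤ 2 * (x - 1) / (x + 1) := by
            rw [div_le_div_iff₀ (by positivity) (by positivity)]
            nlinarith [sq_nonneg (x - 1)]
        _ ≤ Real.log x := hp
  have hanti : AntitoneOn G (Set.Ioc 0 1) := by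
    apply antitoneOn_of_deriv_nonpos (convex_Ioc 0 1) (hcont.mono (by intro x hx; simp at hx ⊢; exact hx.1))
    · intro x hx
      rw [interior_Ioc] at hx; simp at hx
      exact (hderiv x hx.1).differentiableAt.differentiableWithinAt
    · intro x hx
      rw [interior_Ioc] at hx; simp at hx
      rw [(hderiv x hx.1).deriv]
      have hp := pade_le hx.1 (le_of_lt hx.2)
      rw [sub_nonpos]
      calc Real.log x ≤ 2 * (x - 1) / (x + 1) := hp
        _ ≤ 3 / 2 * ((x - 1) * (x + 5)) / (x + 2) ^ 2 := by
            rw [div_le_div_iff₀ (by nlinarith [hx.1]) (by nlinarith [hx.1])]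
            nlinarith [sq_nonneg (x - 1), hx.1, hx.2]
  have hG1 : G 1 = 0 := by simp [hG]
  rcases le_or_gt 1 t with h | h
  · have := hmono (Set.self_mem_Ici) (Set.mem_Ici.2 h) h
    rw [hG1] at this
    simpa [hG, sub_nonneg] using this
  · have := hanti (Set.mem_Ioc.2 ⟨ht, le_of_lt h⟩) (Set.mem_Ioc.2 ⟨one_pos, le_refl 1⟩) (le_of_lt h)
    rw [hG1] at this
    simpa [hG, sub_nonneg] using this

/-- Pointwise bound: `3(x-y)²/(2(x+2y)) ≤ x log(x/y) - x + y`. -/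
lemma pointwise_kl {x y : ℝ} (hx : 0 ≤ x) (hy : 0 ≤ y) (h : y = 0 → x = 0) :
    3 * (x - y) ^ 2 / (2 * (x + 2 * y)) ≤ x * Real.log (x / y) - x + y := by
  rcases eq_or_lt_of_le hy with hy0 | hy0
  · have hx0 : x = 0 := h hy0.symm
    simp [hx0, ← hy0]
  rcases eq_or_lt_of_le hx with hx0 | hx0
  · rw [← hx0]
    have : 3 * (0 - y) ^ 2 / (2 * (0 + 2 * y)) = 3 / 4 * y := by
      field_simp; ring
    rw [this]; nlinarith
  · have hc := core_ineq (t := x / y) (by positivity)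
    have hyne : y ≠ 0 := ne_of_gt hy0
    have e1 : x / y - 1 = (x - y) / y := by field_simp
    have e2 : x / y + 2 = (x + 2 * y) / y := by field_simp
    rw [e1, e2, div_pow] at hc
    have e3 : 3 * ((x - y) ^ 2 / y ^ 2) / (2 * ((x + 2 * y) / y)) =
        (3 * (x - y) ^ 2 / (2 * (x + 2 * y))) / y := by
      rw [div_eq_div_iff (by positivity) hyne]
      field_simp
    rw [e3] at hc
    have := mul_le_mul_of_nonneg_left hc hy
    rw [mul_div_cancel₀ _ hyne] at this
    calc 3 * (x - y) ^ 2 / (2 * (x + 2 * y))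
        ≤ y * (x / y * Real.log (x / y) - x / y + 1) := this
      _ = x * Real.log (x / y) - x + y := by field_simp

/-- Gibbs pointwise: `u - y ≤ u * log (u / y)`. -/
lemma gibbs_pointwise {u y : ℝ} (hu : 0 ≤ u) (hy : 0 ≤ y) (h : y = 0 → u = 0) :
    u - y ≤ u * Real.log (u / y) := by
  rcases eq_or_lt_of_le hy with hy0 | hy0
  · simp [h hy0.symm, ← hy0]
  rcases eq_or_lt_of_le hu with hu0 | hu0
  · simp only [← hu0, zero_mul, zero_sub]; linarith
  · have hl : Real.log (y / u) ≤ y / u - 1 := Real.log_le_sub_one_of_pos (by positivity)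
    have : Real.log (u / y) = -Real.log (y / u) := by
      rw [← Real.log_inv]; congr 1; field_simp
    rw [this]
    have h2 : 1 - y / u ≤ -Real.log (y / u) := by linarith
    have := mul_le_mul_of_nonneg_left h2 hu
    calc u - y = u * (1 - y / u) := by field_simp
      _ ≤ u * -Real.log (y / u) := this

/-- Discrete Pinsker inequality (natural log). -/
lemma pinsker {α : Type*} [Fintype α] {p q : α → ℝ} (hp : IsPMF p) (hq : IsPMF q)
    (habs : ∀ x, p x = 0 → q x = 0) :
    (∑ x, |p x - q x|) ^ 2 ≤ 2 * ∑ x, q x * Real.log (q x / p x) := by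
  obtain ⟨hp0, hp1⟩ := hp
  obtain ⟨hq0, hq1⟩ := hq
  set S := ∑ x, (q x - p x) ^ 2 / (q x + 2 * p x) with hS
  have step1 : 3 / 2 * S ≤ ∑ x, q x * Real.log (q x / p x) := by
    have he : ∑ x, q x * Real.log (q x / p x) =
        ∑ x, (q x * Real.log (q x / p x) - q x + p x) := by
      rw [Finset.sum_add_distrib, Finset.sum_sub_distrib, hp1, hq1]; ring
    rw [he, hS, Finset.mul_sum]
    apply Finset.sum_le_sum
    intro x _
    have := pointwise_kl (hq0 x) (hp0 x) (habs x)
    calc 3 / 2 * ((q x - p x) ^ 2 / (q x + 2 * p x))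
        = 3 * (q x - p x) ^ 2 / (2 * (q x + 2 * p x)) := by
          rw [mul_comm 2 (q x + 2 * p x), ← div_div]; ring
      _ ≤ _ := this
  have step2 : (∑ x, |p x - q x|) ^ 2 ≤ S * 3 := by
    have hcs := Finset.sum_mul_sq_le_sq_mul_sq Finset.univ
      (fun x => |q x - p x| / Real.sqrt (q x + 2 * p x))
      (fun x => Real.sqrt (q x + 2 * p x))
    have hfg : ∀ x : α, |q x - p x| / Real.sqrt (q x + 2 * p x) * Real.sqrt (q x + 2 * p x)
        = |q x - p x| := by
      intro x
      rcases eq_or_lt_of_le (by nlinarith [hq0 x, hp0 x] : (0:ℝ) ≤ q x + 2 * p x) with h0 | h0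
      · have hqx : q x = 0 := by nlinarith [hq0 x, hp0 x]
        have hpx : p x = 0 := by nlinarith [hq0 x, hp0 x]
        simp [hqx, hpx]
      · rw [div_mul_cancel₀]
        exact ne_of_gt (Real.sqrt_pos.2 h0)
    have hf2 : ∀ x : α, (|q x - p x| / Real.sqrt (q x + 2 * p x)) ^ 2
        = (q x - p x) ^ 2 / (q x + 2 * p x) := by
      intro x
      rw [div_pow, sq_abs, Real.sq_sqrt (by nlinarith [hq0 x, hp0 x])]
    have hg2 : ∑ x, (Real.sqrt (q x + 2 * p x)) ^ 2 = 3 := by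
      have : ∀ x : α, (Real.sqrt (q x + 2 * p x)) ^ 2 = q x + 2 * p x := fun x =>
        Real.sq_sqrt (by nlinarith [hq0 x, hp0 x])
      rw [Finset.sum_congr rfl fun x _ => this x, Finset.sum_add_distrib, hq1, ← Finset.mul_sum, hp1]
      norm_num
    calc (∑ x, |p x - q x|) ^ 2 = (∑ x, |q x - p x|) ^ 2 := by
          congr 1; exact Finset.sum_congr rfl fun x _ => abs_sub_comm _ _
      _ = (∑ x, |q x - p x| / Real.sqrt (q x + 2 * p x) * Real.sqrt (q x + 2 * p x)) ^ 2 := by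
          congr 1; exact (Finset.sum_congr rfl fun x _ => (hfg x).symm)
      _ ≤ (∑ x, (|q x - p x| / Real.sqrt (q x + 2 * p x)) ^ 2) *
            ∑ x, (Real.sqrt (q x + 2 * p x)) ^ 2 := hcs
      _ = S * 3 := by
          rw [hg2, hS]; congr 1; exact Finset.sum_congr rfl fun x _ => hf2 x
  nlinarith [step1, step2]

/-- Concave increment inequality. -/
lemma concave_increment {f : ℝ → ℝ} (hf : ConcaveOn ℝ (Set.Ici 0) f)
    {a c t : ℝ} (ha : 0 ≤ a) (hac : a ≤ c) (ht : 0 ≤ t) :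
    f a + f (c + t) ≤ f (a + t) + f c := by
  rcases eq_or_lt_of_le (show (0:ℝ) ≤ c + t - a by linarith) with hd | hd
  · have ht0 : t = 0 := by linarith
    have hca : c = a := by linarith
    rw [ht0, hca, add_zero]
  · set d := c + t - a with hdd
    set μ := t / d with hμ
    set ν := (c - a) / d with hν
    have hdne : d ≠ 0 := ne_of_gt hd
    have hμ0 : 0 ≤ μ := div_nonneg ht (le_of_lt hd)
    have hν0 : 0 ≤ ν := div_nonneg (by linarith) (le_of_lt hd)
    have hμν : ν + μ = 1 := by rw [hν, hμ, ← add_div, div_eq_one_iff_eq hdne, hdd]; ring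
    have hma : a ∈ Set.Ici (0:ℝ) := ha
    have hmct : c + t ∈ Set.Ici (0:ℝ) := by simp; linarith
    have h1 := hf.2 hma hmct hν0 hμ0 hμν
    have h2 := hf.2 hma hmct hμ0 hν0 (by linarith)
    have e1 : ν • a + μ • (c + t) = a + t := by
      simp only [smul_eq_mul, hν, hμ]
      field_simp
      ring
    have e2 : μ • a + ν • (c + t) = c := by
      simp only [smul_eq_mul, hν, hμ]
      field_simp
      ring
    rw [e1] at h1
    rw [e2] at h2
    have := add_le_add h1 h2
    simp only [smul_eq_mul] at this ⊢
    have key : ν * f a + μ * f (c + t) + (μ * f a + ν * f (c + t)) =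
        (ν + μ) * (f a + f (c + t)) := by ring
    rw [key, hμν, one_mul] at this
    exact this

/-- `negMulLog (1 - t) ≤ negMulLog t` for `t ∈ [0, 1/2]`. -/
lemma negMulLog_one_sub_le {t : ℝ} (ht0 : 0 ≤ t) (ht : t ≤ 1 / 2) :
    Real.negMulLog (1 - t) ≤ Real.negMulLog t := by
  set φ : ℝ → ℝ := fun x => Real.negMulLog x - Real.negMulLog (1 - x) with hφ
  have hconc : ConcaveOn ℝ (Set.Icc 0 (1/2)) φ := by
    apply concaveOn_of_hasDerivWithinAt2_nonpos (f' := fun x => -Real.log x - Real.log (1 - x) - 2)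
      (f'' := fun x => -x⁻¹ + (1 - x)⁻¹) (convex_Icc 0 (1/2))
    · fun_prop
    · intro x hx
      rw [interior_Icc] at hx
      obtain ⟨hx1, hx2⟩ := hx
      have h1 : HasDerivAt Real.negMulLog (-Real.log x - 1) x :=
        Real.hasDerivAt_negMulLog (ne_of_gt hx1)
      have h2 : HasDerivAt (fun x : ℝ => Real.negMulLog (1 - x)) (Real.log (1 - x) + 1) x := by
        have hb : HasDerivAt (fun x : ℝ => 1 - x) (-1) x := by
          simpa using (hasDerivAt_id x).const_sub 1
        have := (Real.hasDerivAt_negMulLog (x := 1 - x) (by norm_num; linarith)).comp x hb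
        refine this.congr_deriv ?_
        ring
      have := h1.fun_sub h2
      refine HasDerivAt.hasDerivWithinAt ?_
      convert this using 1
      ring
    · intro x hx
      rw [interior_Icc] at hx
      obtain ⟨hx1, hx2⟩ := hx
      have h1 : HasDerivAt (fun x : ℝ => -Real.log x) (-x⁻¹) x :=
        (Real.hasDerivAt_log (ne_of_gt hx1)).neg
      have h2 : HasDerivAt (fun x : ℝ => Real.log (1 - x)) (-(1 - x)⁻¹) x := by
        have hb : HasDerivAt (fun x : ℝ => 1 - x) (-1) x := by
          simpa using (hasDerivAt_id x).const_sub 1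
        have := (Real.hasDerivAt_log (x := 1 - x) (by norm_num; linarith)).comp x hb
        refine this.congr_deriv ?_
        ring
      refine HasDerivAt.hasDerivWithinAt ?_
      have := (h1.fun_sub h2).sub_const 2
      convert this using 1
      ring
    · intro x hx
      rw [interior_Icc] at hx
      obtain ⟨hx1, hx2⟩ := hx
      have : (1 - x)⁻¹ ≤ x⁻¹ := by
        apply inv_anti₀ hx1
        linarith
      linarith
  have h0 : φ 0 = 0 := by simp [hφ]
  have h12 : φ (1/2) = 0 := by norm_num [hφ]
  have hmem : t ∈ Set.Icc (0:ℝ) (1/2) := ⟨ht0, ht⟩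
  have hcomb := hconc.2 (Set.left_mem_Icc.2 (by norm_num)) (Set.right_mem_Icc.2 (by norm_num))
    (show (0:ℝ) ≤ 1 - 2 * t by linarith) (show (0:ℝ) ≤ 2 * t by linarith) (by ring)
  have e : (1 - 2 * t) • (0:ℝ) + (2 * t) • (1/2 : ℝ) = t := by
    simp [smul_eq_mul]; ring
  rw [e, h0, h12] at hcomb
  simp only [smul_eq_mul, mul_zero, add_zero, hφ] at hcomb
  linarith

lemma negMulLog_sub_le {a b : ℝ} (ha0 : 0 ≤ a) (ha1 : a ≤ 1) (hb0 : 0 ≤ b) (hb1 : b ≤ 1)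
    (hab : |a - b| ≤ 1 / 2) :
    Real.negMulLog a - Real.negMulLog b ≤ Real.negMulLog |a - b| := by
  have hconc := Real.concaveOn_negMulLog
  rcases le_total a b with h | h
  · have habs : |a - b| = b - a := by rw [abs_sub_comm, abs_of_nonneg (by linarith)]
    rw [habs] at hab ⊢
    have hinc := concave_increment hconc ha0 (show a ≤ 1 - (b - a) by linarith)
      (show 0 ≤ b - a by linarith)
    have e1 : 1 - (b - a) + (b - a) = 1 := by ring
    have e2 : a + (b - a) = b := by ring
    rw [e1, e2] at hinc
    have h1t := negMulLog_one_sub_le (show 0 ≤ b - a by linarith) hab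
    have hf1 : Real.negMulLog 1 = 0 := Real.negMulLog_one
    linarith
  · have habs : |a - b| = a - b := abs_of_nonneg (by linarith)
    rw [habs] at hab ⊢
    have hinc := concave_increment hconc (le_refl (0:ℝ)) hb0 (show 0 ≤ a - b by linarith)
    have e1 : b + (a - b) = a := by ring
    have e2 : (0:ℝ) + (a - b) = a - b := by ring
    rw [e1, e2] at hinc
    have hf0 : Real.negMulLog 0 = 0 := Real.negMulLog_zero
    linarith

/-- Fannes-type continuity bound for Shannon entropy (natural log). -/
lemma entropy_diff_le_fannes {α : Type*} [Fintype α] {p q : α → ℝ} (hp : IsPMF p) (hq : IsPMF q)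
    {Dr : ℝ} (hDr0 : 0 < Dr) (hDr : Dr ≤ 1 / 2) (hT : ∑ x, |p x - q x| ≤ Dr) :
    ∑ x, Real.negMulLog (p x) - ∑ x, Real.negMulLog (q x) ≤
      Dr * Real.log (Fintype.card α) - Dr * Real.log Dr := by
  obtain ⟨hp0, hp1⟩ := hp
  obtain ⟨hq0, hq1⟩ := hq
  have hne : Nonempty α := by
    by_contra hne
    rw [not_nonempty_iff] at hne
    rw [Finset.univ_eq_empty, Finset.sum_empty] at hp1
    norm_num at hp1
  have hcard1 : 1 ≤ Fintype.card α := Fintype.card_pos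
  have hlogDr : Real.log Dr ≤ 0 := Real.log_nonpos (le_of_lt hDr0) (by linarith)
  have hlogcard : 0 ≤ Real.log (Fintype.card α) :=
    Real.log_nonneg (by exact_mod_cast hcard1)
  have hple1 : ∀ x, p x ≤ 1 := fun x => hp1 ▸ Finset.single_le_sum (fun y _ => hp0 y)
    (Finset.mem_univ x)
  have hqle1 : ∀ x, q x ≤ 1 := fun x => hq1 ▸ Finset.single_le_sum (fun y _ => hq0 y)
    (Finset.mem_univ x)
  set T := ∑ x, |p x - q x| with hTdef
  have hT0 : 0 ≤ T := Finset.sum_nonneg fun x _ => abs_nonneg _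
  have htle : ∀ x, |p x - q x| ≤ 1 / 2 := by
    intro x
    calc |p x - q x| ≤ T := Finset.single_le_sum (f := fun y => |p y - q y|)
          (fun y _ => abs_nonneg _) (Finset.mem_univ x)
      _ ≤ Dr := hT
      _ ≤ 1 / 2 := hDr
  have stepA : ∑ x, Real.negMulLog (p x) - ∑ x, Real.negMulLog (q x) ≤
      ∑ x, Real.negMulLog (|p x - q x|) := by
    rw [← Finset.sum_sub_distrib]
    exact Finset.sum_le_sum fun x _ =>
      negMulLog_sub_le (hp0 x) (hple1 x) (hq0 x) (hqle1 x) (htle x)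
  rcases eq_or_lt_of_le hT0 with hT0' | hT0'
  · have hz : ∀ x, Real.negMulLog (|p x - q x|) = 0 := by
      intro x
      have : |p x - q x| = 0 := by
        have := Finset.single_le_sum (fun y (_ : y ∈ Finset.univ) => abs_nonneg (p y - q y))
          (Finset.mem_univ x)
        simp only [← hTdef] at this
        nlinarith [abs_nonneg (p x - q x)]
      rw [this, Real.negMulLog_zero]
    calc ∑ x, Real.negMulLog (p x) - ∑ x, Real.negMulLog (q x)
        ≤ ∑ x, Real.negMulLog (|p x - q x|) := stepA
      _ = 0 := by rw [Finset.sum_congr rfl fun x _ => hz x]; simp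
      _ ≤ Dr * Real.log (Fintype.card α) - Dr * Real.log Dr := by nlinarith
  · -- T > 0
    have hcard2 : 2 ≤ Fintype.card α := by
      by_contra hc
      push_neg at hc
      have h : Fintype.card α = 1 := by omega
      obtain ⟨x, hx⟩ := Fintype.card_eq_one_iff.1 h
      have huniv : (Finset.univ : Finset α) = {x} := by
        ext y; simp [hx y]
      rw [hTdef, huniv, Finset.sum_singleton] at hT0'
      rw [huniv, Finset.sum_singleton] at hp1 hq1
      rw [hp1, hq1] at hT0'
      simp at hT0'
    have hcard2' : (2:ℝ) ≤ (Fintype.card α : ℝ) := by exact_mod_cast hcard2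
    -- Gibbs step: ∑ negMulLog t ≤ T log card - T log T
    have gibbs : ∑ x, Real.negMulLog (|p x - q x|) ≤
        T * Real.log (Fintype.card α) - T * Real.log T := by
      have hy : (0:ℝ) < T / Fintype.card α := by positivity
      have hpt : ∀ x : α, |p x - q x| - T / Fintype.card α ≤
          |p x - q x| * Real.log (|p x - q x| / (T / Fintype.card α)) := fun x =>
        gibbs_pointwise (abs_nonneg _) (le_of_lt hy) (fun h => absurd h (ne_of_gt hy))
      have hsum := Finset.sum_le_sum fun x (_ : x ∈ Finset.univ) => hpt x
      have hlhs : ∑ x, (|p x - q x| - T / Fintype.card α) = 0 := by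
        rw [Finset.sum_sub_distrib, ← hTdef, Finset.sum_const, Finset.card_univ, nsmul_eq_mul]
        field_simp
        ring
      have hterm : ∀ x : α, |p x - q x| * Real.log (|p x - q x| / (T / Fintype.card α)) =
          |p x - q x| * Real.log (|p x - q x|) - |p x - q x| * Real.log T +
          |p x - q x| * Real.log (Fintype.card α) := by
        intro x
        rcases eq_or_lt_of_le (abs_nonneg (p x - q x)) with h0 | h0
        · rw [← h0]; ring_nf
        · rw [Real.log_div (ne_of_gt h0) (ne_of_gt hy),
            Real.log_div (ne_of_gt hT0') (by positivity)]
          ring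
      rw [hlhs, Finset.sum_congr rfl fun x _ => hterm x] at hsum
      rw [Finset.sum_add_distrib, Finset.sum_sub_distrib, ← Finset.sum_mul, ← Finset.sum_mul,
        ← hTdef] at hsum
      have : ∑ x, Real.negMulLog (|p x - q x|) = -∑ x, |p x - q x| * Real.log (|p x - q x|) := by
        rw [← Finset.sum_neg_distrib]
        exact Finset.sum_congr rfl fun x _ => by rw [Real.negMulLog]; ring
      rw [this]
      linarith
    -- monotonicity step
    have mono : T * Real.log (Fintype.card α) - T * Real.log T ≤
        Dr * Real.log (Fintype.card α) - Dr * Real.log Dr := by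
      have hlog2 : (0.6931471803 : ℝ) < Real.log 2 := Real.log_two_gt_d9
      have h1 : Real.log Dr - Real.log T = Real.log (Dr / T) :=
        (Real.log_div (ne_of_gt hDr0) (ne_of_gt hT0')).symm
      have h2 : Real.log (Dr / T) ≤ Dr / T - 1 := Real.log_le_sub_one_of_pos (by positivity)
      have h3 : T * (Real.log Dr - Real.log T) ≤ Dr - T := by
        rw [h1]
        calc T * Real.log (Dr / T) ≤ T * (Dr / T - 1) :=
              mul_le_mul_of_nonneg_left h2 (le_of_lt hT0')
          _ = Dr - T := by field_simp
      have h4 : 1 ≤ Real.log (Fintype.card α) - Real.log Dr := by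
        have ha : Real.log 2 ≤ Real.log (Fintype.card α) :=
          Real.log_le_log (by norm_num) hcard2'
        have hb : Real.log Dr ≤ Real.log (1/2) :=
          Real.log_le_log hDr0 hDr
        have hc : Real.log (1/2 : ℝ) = -Real.log 2 := by
          rw [one_div, Real.log_inv]
        linarith
      nlinarith [hT0', h3, h4, sub_nonneg.2 hT]
    linarith [stepA, gibbs, mono]

lemma pushforward_isPMF {Ω β : Type*} [Fintype Ω] [Fintype β] [DecidableEq β]
    {p : Ω → ℝ} (hp : IsPMF p) (f : Ω → β) : IsPMF (pushforward p f) := by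
  obtain ⟨hp0, hp1⟩ := hp
  constructor
  · intro b
    exact Finset.sum_nonneg fun ω _ => by split <;> simp [hp0 ω]
  · rw [← hp1]
    unfold pushforward
    rw [Finset.sum_comm]
    exact Finset.sum_congr rfl fun ω _ => by simp

lemma pushforward_l1_le {Ω β : Type*} [Fintype Ω] [Fintype β] [DecidableEq β]
    (p q : Ω → ℝ) (f : Ω → β) :
    ∑ b, |pushforward p f b - pushforward q f b| ≤ ∑ ω, |p ω - q ω| := by
  unfold pushforward
  calc ∑ b, |∑ ω, (if f ω = b then p ω else 0) - ∑ ω, (if f ω = b then q ω else 0)|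
      = ∑ b, |∑ ω, (if f ω = b then p ω - q ω else 0)| := by
        apply Finset.sum_congr rfl; intro b _
        rw [← Finset.sum_sub_distrib]
        congr 1
        exact Finset.sum_congr rfl fun ω _ => by split <;> simp
    _ ≤ ∑ b, ∑ ω, |if f ω = b then p ω - q ω else 0| :=
        Finset.sum_le_sum fun b _ => Finset.abs_sum_le_sum_abs _ _
    _ = ∑ b, ∑ ω, (if f ω = b then |p ω - q ω| else 0) := by
        apply Finset.sum_congr rfl; intro b _
        exact Finset.sum_congr rfl fun ω _ => by split <;> simp
    _ = ∑ ω, ∑ b, (if f ω = b then |p ω - q ω| else 0) := Finset.sum_comm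
    _ = ∑ ω, |p ω - q ω| := Finset.sum_congr rfl fun ω _ => by simp

lemma shannonEntropy_eq {α : Type*} [Fintype α] (p : α → ℝ) :
    shannonEntropy p = (∑ x, Real.negMulLog (p x)) / Real.log 2 := by
  unfold shannonEntropy
  rw [Finset.sum_div]
  rw [← Finset.sum_neg_distrib]
  apply Finset.sum_congr rfl
  intro x _
  rw [Real.negMulLog, Real.logb]
  field_simp

lemma arith_combine {x y N Dr lc lD : ℝ} (hx : x ≤ Dr * (N * lc) - Dr * lD)
    (hy : y ≤ Dr * (N * lc) - Dr * lD) (hN1 : 1 ≤ N) (hDr0 : 0 < Dr) (hlD : lD ≤ 0) :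
    x + y ≤ 2 * N * Dr * (lc - lD) := by
  nlinarith [mul_nonneg (mul_nonneg (sub_nonneg.2 hN1) (le_of_lt hDr0)) (neg_nonneg.2 hlD)]

lemma marginal_bound {Ω β : Type*} [Fintype Ω] [Fintype β] [DecidableEq β]
    {p q : Ω → ℝ} (hp : IsPMF p) (hq : IsPMF q) {Dr : ℝ}
    (hDr0 : 0 < Dr) (hDr12 : Dr ≤ 1 / 2) (hT : ∑ x, |p x - q x| ≤ Dr) (f : Ω → β) :
    ∑ b, Real.negMulLog (pushforward p f b) - ∑ b, Real.negMulLog (pushforward q f b) ≤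
      Dr * Real.log (Fintype.card β) - Dr * Real.log Dr :=
  entropy_diff_le_fannes (pushforward_isPMF hp f) (pushforward_isPMF hq f) hDr0 hDr12
    (le_trans (pushforward_l1_le p q f) hT)

end Aux

/-- Per-position conditional-entropy continuity bound, Eq. (eq11a), in the
proof of Lemma 5: with `D = √(2 ln 2)·√(D(q‖p))` (in `[0,+∞]`), if
`0 < D ≤ 1/2` then for every `j`,
`H_p(U^j|U^{1:j−1}) − H_q(U^j|U^{1:j−1}) ≤ 2N·D·log₂(|𝒳|/D)`. -/
theorem condEnt_diff_le_per_position
    {𝒳 : Type*} [Fintype 𝒳] [DecidableEq 𝒳] (hcard : 2 ≤ Fintype.card 𝒳)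
    {N : ℕ} (hN : 1 ≤ N)
    (p q : (Fin N → 𝒳) → ℝ) (hp : IsPMF p) (hq : IsPMF q)
    (D : ℝ≥0∞)
    (hD : D = ENNReal.ofReal (Real.sqrt (2 * Real.log 2)) * (klDiv q p) ^ (1 / 2 : ℝ))
    (hD0 : 0 < D) (hDhalf : D ≤ ENNReal.ofReal (1 / 2)) :
    ∀ j : Fin N,
      condEntChain p j - condEntChain q j ≤
        2 * (N : ℝ) * D.toReal * Real.logb 2 ((Fintype.card 𝒳 : ℝ) / D.toReal) := by
  intro j
  have hlog2 : 0 < Real.log 2 := Real.log_pos (by norm_num)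
  set c := (Fintype.card 𝒳 : ℝ) with hc
  have hc2 : (2:ℝ) ≤ c := by rw [hc]; exact_mod_cast hcard
  have hc0 : (0:ℝ) < c := by linarith
  have hlogc0 : 0 ≤ Real.log c := Real.log_nonneg (by linarith)
  have hDtop : D ≠ ⊤ := ne_top_of_le_ne_top ENNReal.ofReal_ne_top hDhalf
  have hsupp : ∀ x, p x = 0 → q x = 0 := by
    by_contra hs
    have hkl : klDiv q p = ⊤ := by rw [klDiv, if_neg hs]
    rw [hkl, ENNReal.top_rpow_of_pos (by norm_num),
      ENNReal.mul_top (by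
        rw [ne_eq, ENNReal.ofReal_eq_zero, not_le]
        exact Real.sqrt_pos.2 (by positivity))] at hD
    exact hDtop hD
  set KLb := ∑ x, q x * Real.logb 2 (q x / p x) with hKLb
  have hkl : klDiv q p = ENNReal.ofReal KLb := by rw [klDiv, if_pos hsupp]
  set KLn := ∑ x, q x * Real.log (q x / p x) with hKLn
  have hKLrel : KLn = Real.log 2 * KLb := by
    rw [hKLn, hKLb, Finset.mul_sum]
    apply Finset.sum_congr rfl
    intro x _
    rw [Real.logb]
    field_simp
  have hKLn0 : 0 ≤ KLn := by
    have h1 : ∑ x, (q x - p x) ≤ KLn :=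
      Finset.sum_le_sum fun x _ => gibbs_pointwise (hq.1 x) (hp.1 x) (hsupp x)
    rw [Finset.sum_sub_distrib, hq.2, hp.2] at h1
    linarith
  have hKLb0 : 0 ≤ KLb := by
    by_contra hb
    push_neg at hb
    nlinarith [mul_pos hlog2 (neg_pos.2 hb)]
  set Dr := D.toReal with hDrdef
  have hDr : Dr = Real.sqrt (2 * Real.log 2) * Real.sqrt KLb := by
    rw [hDrdef, hD, hkl, ENNReal.ofReal_rpow_of_nonneg hKLb0 (by norm_num),
      ← ENNReal.ofReal_mul (Real.sqrt_nonneg _),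
      ENNReal.toReal_ofReal (by positivity)]
    congr 1
    rw [Real.sqrt_eq_rpow]
  have hDrsq : Dr ^ 2 = 2 * KLn := by
    rw [hDr, mul_pow, Real.sq_sqrt (by positivity), Real.sq_sqrt hKLb0, hKLrel]
    ring
  have hDr0 : 0 < Dr := ENNReal.toReal_pos (ne_of_gt hD0) hDtop
  have hDr12 : Dr ≤ 1 / 2 := ENNReal.toReal_le_of_le_ofReal (by norm_num) hDhalf
  have hlogDr : Real.log Dr ≤ 0 := Real.log_nonpos (le_of_lt hDr0) (by linarith)
  have hT : ∑ x, |p x - q x| ≤ Dr := by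
    have hpk := pinsker hp hq hsupp
    have hsq : (∑ x, |p x - q x|) ^ 2 ≤ Dr ^ 2 := by rw [hDrsq]; exact hpk
    nlinarith [hsq, hDr0, Finset.sum_nonneg (fun x (_ : x ∈ Finset.univ) => abs_nonneg (p x - q x))]
  have hT' : ∑ x, |q x - p x| ≤ Dr := by
    calc ∑ x, |q x - p x| = ∑ x, |p x - q x| :=
          Finset.sum_congr rfl fun x _ => abs_sub_comm _ _
      _ ≤ Dr := hT
  -- marginals
  set fA := (fun u : Fin N → 𝒳 => fun l : Fin ((j : ℕ) + 1) => u (Fin.castLE j.isLt l)) with hfA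
  set fB := (fun u : Fin N → 𝒳 => fun l : Fin (j : ℕ) => u (Fin.castLE j.isLt.le l)) with hfB
  have hcardA : Real.log (Fintype.card (Fin ((j : ℕ) + 1) → 𝒳)) ≤ N * Real.log c := by
    rw [Fintype.card_fun, Fintype.card_fin]
    push_cast
    rw [Real.log_pow, ← hc]
    have : ((j : ℕ) + 1 : ℝ) ≤ N := by exact_mod_cast j.isLt
    push_cast
    nlinarith
  have hcardB : Real.log (Fintype.card (Fin (j : ℕ) → 𝒳)) ≤ N * Real.log c := by
    rw [Fintype.card_fun, Fintype.card_fin]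
    push_cast
    rw [Real.log_pow, ← hc]
    have : ((j : ℕ) : ℝ) ≤ N := by exact_mod_cast le_of_lt j.isLt
    push_cast
    nlinarith
  have boundA := marginal_bound hp hq hDr0 hDr12 hT fA
  have boundB := marginal_bound hq hp hDr0 hDr12 hT' fB
  have hN1 : (1:ℝ) ≤ N := by exact_mod_cast hN
  -- assemble in natural logs
  have natgoal : (∑ b, Real.negMulLog (pushforward p fA b) - ∑ b, Real.negMulLog (pushforward q fA b))
      + (∑ b, Real.negMulLog (pushforward q fB b) - ∑ b, Real.negMulLog (pushforward p fB b)) ≤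
      2 * N * Dr * (Real.log c - Real.log Dr) := by
    have hA' : ∑ b, Real.negMulLog (pushforward p fA b) - ∑ b, Real.negMulLog (pushforward q fA b)
        ≤ Dr * (N * Real.log c) - Dr * Real.log Dr := by
      refine le_trans boundA ?_
      have := mul_le_mul_of_nonneg_left hcardA (le_of_lt hDr0)
      linarith
    have hB' : ∑ b, Real.negMulLog (pushforward q fB b) - ∑ b, Real.negMulLog (pushforward p fB b)
        ≤ Dr * (N * Real.log c) - Dr * Real.log Dr := by
      refine le_trans boundB ?_
      have := mul_le_mul_of_nonneg_left hcardB (le_of_lt hDr0)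
      linarith
    exact arith_combine hA' hB' hN1 hDr0 hlogDr
  -- convert to base 2
  have goal_eq : condEntChain p j - condEntChain q j =
      ((∑ b, Real.negMulLog (pushforward p fA b) - ∑ b, Real.negMulLog (pushforward q fA b))
        + (∑ b, Real.negMulLog (pushforward q fB b) - ∑ b, Real.negMulLog (pushforward p fB b)))
        / Real.log 2 := by
    rw [condEntChain, condEntChain, ← hfA, ← hfB,
      shannonEntropy_eq, shannonEntropy_eq, shannonEntropy_eq, shannonEntropy_eq]
    ring
  have rhs_eq : 2 * (N : ℝ) * Dr * Real.logb 2 (c / Dr) =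
      (2 * N * Dr * (Real.log c - Real.log Dr)) / Real.log 2 := by
    rw [Real.logb, Real.log_div (ne_of_gt hc0) (ne_of_gt hDr0)]
    ring
  rw [goal_eq, rhs_eq]
  exact div_le_div_of_nonneg_right natgoal (le_of_lt hlog2)
end
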